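/- arXiv:2307.12077 — 4 statements merged into one kernel-verified Lean document; each statement's English description precedes it below -/
import Mathlib

section
/- Let 𝒫₀ be a nonempty convex set of Borel probability measures on ℝ that is compact in the topology of weak convergence and satisfies sup_{Q∈𝒫₀} ∫ x² dQ(x) < ∞. Set μ̄ = sup_{Q∈𝒫₀} ∫ x dQ(x) and μ̲ = inf_{Q∈𝒫₀} ∫ x dQ(x). Then the upper variance V̄ := inf_{μ∈[μ̲,μ̄]} sup_{Q∈𝒫₀} ∫ (x−μ)² dQ(x) satisfies V̄ = sup_{Q∈𝒫₀} Var_Q, where Var_Q = ∫ x² dQ − (∫ x dQ)² is the classical variance of the identity under Q; moreover the infimum over μ ∈ [μ̲,μ̄] is attained. -/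
open MeasureTheory ProbabilityTheory Filter
open scoped ENNReal NNReal

set_option maxHeartbeats 1000000 in
/-- For a nonempty convex weakly compact set `𝒫₀` of Borel probability
measures on `ℝ` with uniformly bounded second moments, the upper variance
`V̄ = inf_{μ ∈ [μ̲, μ̄]} sup_{Q ∈ 𝒫₀} ∫ (x − μ)² dQ` equals `sup_{Q ∈ 𝒫₀} Var_Q`, and
the infimum over `μ ∈ [μ̲, μ̄]` is attained. -/
theorem upper_variance_eq_sup_variance
    (𝒫₀ : Set (ProbabilityMeasure ℝ)) (hne : 𝒫₀.Nonempty)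
    (hconv : ∀ P ∈ 𝒫₀, ∀ Q ∈ 𝒫₀, ∀ R : ProbabilityMeasure ℝ, ∀ c : ℝ≥0∞, c ≤ 1 →
      (R : Measure ℝ) = c • (P : Measure ℝ) + (1 - c) • (Q : Measure ℝ) → R ∈ 𝒫₀)
    (hcpt : IsCompact 𝒫₀)
    (hmom : ∃ M : ℝ, ∀ Q ∈ 𝒫₀, ∫⁻ x, ENNReal.ofReal (x ^ 2) ∂(Q : Measure ℝ) ≤
      ENNReal.ofReal M) :
    ∃ μ ∈ Set.Icc (⨅ Q : 𝒫₀, ∫ x, x ∂(Q : Measure ℝ)) (⨆ Q : 𝒫₀, ∫ x, x ∂(Q : Measure ℝ)),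
      (⨆ Q : 𝒫₀, ∫ x, (x - μ) ^ 2 ∂(Q : Measure ℝ))
          = (⨆ Q : 𝒫₀, variance id (Q : Measure ℝ)) ∧
      ∀ μ' ∈ Set.Icc (⨅ Q : 𝒫₀, ∫ x, x ∂(Q : Measure ℝ)) (⨆ Q : 𝒫₀, ∫ x, x ∂(Q : Measure ℝ)),
        (⨆ Q : 𝒫₀, variance id (Q : Measure ℝ)) ≤ ⨆ Q : 𝒫₀, ∫ x, (x - μ') ^ 2 ∂(Q : Measure ℝ) := by
  classical
  haveI : Nonempty 𝒫₀ := hne.to_subtype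
  obtain ⟨M, hM⟩ := hmom
  set M' : ℝ := max M 0 with hM'def
  have hM'0 : (0 : ℝ) ≤ M' := le_max_right _ _
  set m : 𝒫₀ → ℝ := fun Q => ∫ x, x ∂(Q : Measure ℝ) with hm_def
  set v : 𝒫₀ → ℝ := fun Q => variance id (Q : Measure ℝ) with hv_def
  -- basic integrability facts
  have hmeas : ∀ Q : 𝒫₀, AEStronglyMeasurable (fun x : ℝ => x ^ 2) (Q : Measure ℝ) :=
    fun Q => (continuous_id.pow 2).aestronglyMeasurable
  have key2 : ∀ Q : 𝒫₀, Integrable (fun x => x ^ 2) (Q : Measure ℝ) := by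
    intro Q
    refine ⟨hmeas Q, ?_⟩
    rw [HasFiniteIntegral]
    calc ∫⁻ x, (‖x ^ 2‖₊ : ℝ≥0∞) ∂(Q : Measure ℝ)
        = ∫⁻ x, ENNReal.ofReal (x ^ 2) ∂(Q : Measure ℝ) := by
          simp_rw [← enorm_eq_nnnorm, fun x : ℝ => Real.enorm_eq_ofReal (sq_nonneg x)]
      _ ≤ ENNReal.ofReal M := hM Q Q.2
      _ < ⊤ := ENNReal.ofReal_lt_top
  have hsq_le : ∀ Q : 𝒫₀, ∫ x, x ^ 2 ∂(Q : Measure ℝ) ≤ M' := by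
    intro Q
    rw [integral_eq_lintegral_of_nonneg_ae (Filter.Eventually.of_forall fun x => sq_nonneg x)
      (hmeas Q)]
    calc (∫⁻ x, ENNReal.ofReal (x ^ 2) ∂(Q : Measure ℝ)).toReal ≤ (ENNReal.ofReal M).toReal :=
          ENNReal.toReal_mono ENNReal.ofReal_ne_top (hM Q Q.2)
      _ = M' := ENNReal.toReal_ofReal'
  have hint1 : ∀ Q : 𝒫₀, Integrable (fun x : ℝ => x) (Q : Measure ℝ) := by
    intro Q
    refine Integrable.mono' ((key2 Q).add (integrable_const 1)) aestronglyMeasurable_id ?_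
    filter_upwards with x
    simp only [Real.norm_eq_abs, Pi.add_apply]
    nlinarith [sq_nonneg (|x| - 1), sq_abs x, abs_nonneg x]
  have hmem : ∀ Q : 𝒫₀, MemLp id 2 (Q : Measure ℝ) := fun Q =>
    (memLp_two_iff_integrable_sq aestronglyMeasurable_id).2 (key2 Q)
  have hvar : ∀ Q : 𝒫₀, v Q = ∫ x, x ^ 2 ∂(Q : Measure ℝ) - (m Q) ^ 2 := by
    intro Q
    show variance id _ = _
    rw [variance_eq_sub (hmem Q)]
    simp [hm_def]
  have hident : ∀ (Q : 𝒫₀) (μ : ℝ),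
      ∫ x, (x - μ) ^ 2 ∂(Q : Measure ℝ) = v Q + (m Q - μ) ^ 2 := by
    intro Q μ
    have h1 : ∀ x : ℝ, (x - μ) ^ 2 = (x ^ 2 - (2 * μ) * x) + μ ^ 2 := fun x => by ring
    calc ∫ x, (x - μ) ^ 2 ∂(Q : Measure ℝ)
        = ∫ x, ((x ^ 2 - (2 * μ) * x) + μ ^ 2) ∂(Q : Measure ℝ) := by simp_rw [h1]
      _ = (∫ x, (x ^ 2 - (2 * μ) * x) ∂(Q : Measure ℝ)) + ∫ _, μ ^ 2 ∂(Q : Measure ℝ) :=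
          integral_add ((key2 Q).sub ((hint1 Q).const_mul _)) (integrable_const _)
      _ = (∫ x, x ^ 2 ∂(Q : Measure ℝ)) - (2 * μ) * m Q + μ ^ 2 := by
          rw [integral_sub (key2 Q) ((hint1 Q).const_mul _), integral_const_mul,
            integral_const]
          simp [hm_def]
      _ = v Q + (m Q - μ) ^ 2 := by rw [hvar Q]; ring
  have hv0 : ∀ Q : 𝒫₀, 0 ≤ v Q := fun Q => variance_nonneg _ _
  have hm_sq : ∀ Q : 𝒫₀, (m Q) ^ 2 ≤ M' := by
    intro Q
    have h1 := hv0 Q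
    rw [hvar Q] at h1
    linarith [hsq_le Q]
  have hv_le : ∀ Q : 𝒫₀, v Q ≤ M' := by
    intro Q
    rw [hvar Q]
    nlinarith [sq_nonneg (m Q), hsq_le Q]
  have hm_abs : ∀ Q : 𝒫₀, |m Q| ≤ Real.sqrt M' := by
    intro Q
    rw [← Real.sqrt_sq_eq_abs]
    exact Real.sqrt_le_sqrt (hm_sq Q)
  have hbm : BddAbove (Set.range m) := by
    refine ⟨Real.sqrt M', ?_⟩
    rintro y ⟨Q, rfl⟩
    exact le_of_abs_le (hm_abs Q)
  have hbm' : BddBelow (Set.range m) := by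
    refine ⟨-Real.sqrt M', ?_⟩
    rintro y ⟨Q, rfl⟩
    exact neg_le_of_abs_le (hm_abs Q)
  have hbv : BddAbove (Set.range v) := by
    refine ⟨M', ?_⟩
    rintro y ⟨Q, rfl⟩
    exact hv_le Q
  set a : ℝ := ⨅ Q : 𝒫₀, m Q with ha_def
  set b : ℝ := ⨆ Q : 𝒫₀, m Q with hb_def
  set V : ℝ := ⨆ Q : 𝒫₀, v Q with hV_def
  have hmab : ∀ Q : 𝒫₀, m Q ∈ Set.Icc a b := fun Q => ⟨ciInf_le hbm' Q, le_ciSup hbm Q⟩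
  have hab : a ≤ b := by
    obtain ⟨Q⟩ := (inferInstance : Nonempty 𝒫₀)
    exact (hmab Q).1.trans (hmab Q).2
  set h : ℝ → ℝ := fun μ => ⨆ Q : 𝒫₀, (v Q + (m Q - μ) ^ 2) with hh_def
  have hbh : ∀ (μ : ℝ) (Q : 𝒫₀),
      v Q + (m Q - μ) ^ 2 ≤ M' + (Real.sqrt M' + |μ|) ^ 2 := by
    intro μ Q
    have h1 : |m Q - μ| ≤ Real.sqrt M' + |μ| :=
      (abs_sub _ _).trans (add_le_add_left (hm_abs Q) _)
    have h2 : (m Q - μ) ^ 2 ≤ (Real.sqrt M' + |μ|) ^ 2 := by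
      rw [← sq_abs]
      exact pow_le_pow_left₀ (abs_nonneg _) h1 2
    linarith [hv_le Q]
  have hbh' : ∀ μ : ℝ, BddAbove (Set.range fun Q : 𝒫₀ => v Q + (m Q - μ) ^ 2) := by
    intro μ
    refine ⟨M' + (Real.sqrt M' + |μ|) ^ 2, ?_⟩
    rintro y ⟨Q, rfl⟩
    exact hbh μ Q
  have hVle : ∀ μ : ℝ, V ≤ h μ := by
    intro μ
    exact ciSup_mono (hbh' μ) fun Q => le_add_of_nonneg_right (sq_nonneg _)
  -- key convexity inequality
  have key : ∀ ε : ℝ, 0 < ε → ε ≤ 1 → ∃ Q0 : 𝒫₀, ∀ Q1 : 𝒫₀,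
      v Q1 + (m Q1 - m Q0) ^ 2 ≤ V + Real.sqrt ε * (1 + 4 * M') := by
    intro ε hε hε1
    obtain ⟨Q0, hQ0⟩ := exists_lt_of_lt_ciSup (show V - ε < V by linarith)
    refine ⟨Q0, fun Q1 => ?_⟩
    set t : ℝ := Real.sqrt ε with ht_def
    have ht0 : 0 < t := Real.sqrt_pos.2 hε
    have ht1 : t ≤ 1 := by
      rw [ht_def, show (1 : ℝ) = Real.sqrt 1 by simp]
      exact Real.sqrt_le_sqrt hε1
    have ht2 : t ^ 2 = ε := Real.sq_sqrt hε.le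
    set c : ℝ≥0∞ := ENNReal.ofReal t with hc_def
    have hc1 : c ≤ 1 := by
      rw [hc_def, show (1 : ℝ≥0∞) = ENNReal.ofReal 1 by simp]
      exact ENNReal.ofReal_le_ofReal ht1
    set ν : Measure ℝ := c • ((Q1 : ProbabilityMeasure ℝ) : Measure ℝ)
      + (1 - c) • ((Q0 : ProbabilityMeasure ℝ) : Measure ℝ) with hν_def
    have hν : IsProbabilityMeasure ν := by
      constructor
      rw [hν_def]
      simp only [Measure.add_apply, Measure.smul_apply, measure_univ, smul_eq_mul, mul_one]
      exact add_tsub_cancel_of_le hc1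
    set R : ProbabilityMeasure ℝ := ⟨ν, hν⟩ with hR_def
    have hR : R ∈ 𝒫₀ := hconv Q1 Q1.2 Q0 Q0.2 R c hc1 rfl
    set R' : 𝒫₀ := ⟨R, hR⟩ with hR'_def
    have hc_top : c ≠ ⊤ := ENNReal.ofReal_ne_top
    have hc'_top : (1 - c) ≠ ⊤ := ne_top_of_le_ne_top ENNReal.one_ne_top tsub_le_self
    have hcr : c.toReal = t := ENNReal.toReal_ofReal ht0.le
    have hc'r : (1 - c).toReal = 1 - t := by
      rw [hc_def, ← ENNReal.ofReal_one, ← ENNReal.ofReal_sub _ ht0.le,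
        ENNReal.toReal_ofReal (by linarith)]
    have hintg : ∀ f : ℝ → ℝ, Integrable f ((Q1 : ProbabilityMeasure ℝ) : Measure ℝ) →
        Integrable f ((Q0 : ProbabilityMeasure ℝ) : Measure ℝ) →
        ∫ x, f x ∂ν = t * ∫ x, f x ∂((Q1 : ProbabilityMeasure ℝ) : Measure ℝ)
          + (1 - t) * ∫ x, f x ∂((Q0 : ProbabilityMeasure ℝ) : Measure ℝ) := by
      intro f h1 h0
      rw [hν_def, integral_add_measure (h1.smul_measure hc_top) (h0.smul_measure hc'_top),
        integral_smul_measure, integral_smul_measure, hcr, hc'r, smul_eq_mul, smul_eq_mul]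
    have hmR : m R' = t * m Q1 + (1 - t) * m Q0 := hintg _ (hint1 Q1) (hint1 Q0)
    have hsR : ∫ x, x ^ 2 ∂((R' : ProbabilityMeasure ℝ) : Measure ℝ)
        = t * ∫ x, x ^ 2 ∂((Q1 : ProbabilityMeasure ℝ) : Measure ℝ)
          + (1 - t) * ∫ x, x ^ 2 ∂((Q0 : ProbabilityMeasure ℝ) : Measure ℝ) :=
      hintg _ (key2 Q1) (key2 Q0)
    have hvR : v R' ≤ V := le_ciSup hbv R'
    have e1 : v R' = t * v Q1 + (1 - t) * v Q0
        + t * (1 - t) * (m Q1 - m Q0) ^ 2 := by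
      rw [hvar R', hvar Q1, hvar Q0, hsR, hmR]
      ring
    have hd0 : (0 : ℝ) ≤ (m Q1 - m Q0) ^ 2 := sq_nonneg _
    have hd4 : (m Q1 - m Q0) ^ 2 ≤ 4 * M' := by
      nlinarith [hm_sq Q1, hm_sq Q0, sq_nonneg (m Q1 + m Q0)]
    have h2 : (1 - t) * (V - ε) ≤ (1 - t) * v Q0 :=
      mul_le_mul_of_nonneg_left hQ0.le (by linarith)
    have h5 : t * v Q1 + (1 - t) * v Q0 + t * (1 - t) * (m Q1 - m Q0) ^ 2 ≤ V := by
      rw [← e1]; exact hvR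
    have h3 : t * (v Q1 + (1 - t) * (m Q1 - m Q0) ^ 2) ≤ t * (V + t) := by
      nlinarith [h5, h2, ht2, mul_nonneg ht0.le hε.le]
    have h4 : v Q1 + (1 - t) * (m Q1 - m Q0) ^ 2 ≤ V + t :=
      le_of_mul_le_mul_left h3 ht0
    nlinarith [mul_le_mul_of_nonneg_left hd4 ht0.le]
  -- h is Lipschitz on [a, b]
  set L : ℝ := 2 * Real.sqrt M' + 2 * (|a| + |b|) with hL_def
  have hL0 : 0 ≤ L := by
    have := Real.sqrt_nonneg M'
    have := abs_nonneg a
    have := abs_nonneg b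
    positivity
  have habs_ab : ∀ μ ∈ Set.Icc a b, |μ| ≤ |a| + |b| := by
    intro μ hμ
    obtain ⟨hμ1, hμ2⟩ := hμ
    rw [abs_le]
    constructor
    · linarith [neg_abs_le a, abs_nonneg b]
    · linarith [le_abs_self b, abs_nonneg a]
  have hstep : ∀ μ ∈ Set.Icc a b, ∀ μ' ∈ Set.Icc a b, h μ ≤ h μ' + L * |μ - μ'| := by
    intro μ hμ μ' hμ'
    refine ciSup_le fun Q => ?_
    have hle : v Q + (m Q - μ') ^ 2 ≤ h μ' := le_ciSup (hbh' μ') Q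
    have heq : (m Q - μ) ^ 2 - (m Q - μ') ^ 2 = (μ' - μ) * (2 * m Q - μ - μ') := by ring
    have h2 : (μ' - μ) * (2 * m Q - μ - μ') ≤ |μ' - μ| * |2 * m Q - μ - μ'| := by
      rw [← abs_mul]
      exact le_abs_self _
    have h3 : |2 * m Q - μ - μ'| ≤ L := by
      calc |2 * m Q - μ - μ'| ≤ 2 * |m Q| + |μ| + |μ'| := by
            have := abs_sub (2 * m Q - μ) μ'
            have := abs_sub (2 * m Q) μ
            have h5 : |2 * m Q| = 2 * |m Q| := by
              rw [abs_mul]; norm_num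
            linarith
        _ ≤ L := by
            rw [hL_def]
            linarith [hm_abs Q, habs_ab μ hμ, habs_ab μ' hμ']
    have h6 : |μ' - μ| * |2 * m Q - μ - μ'| ≤ |μ - μ'| * L := by
      rw [abs_sub_comm μ' μ]
      exact mul_le_mul_of_nonneg_left h3 (abs_nonneg _)
    nlinarith
  have hlip : LipschitzOnWith L.toNNReal h (Set.Icc a b) := by
    rw [lipschitzOnWith_iff_dist_le_mul]
    intro x hx y hy
    rw [Real.dist_eq, Real.dist_eq]
    have hc : (L.toNNReal : ℝ) = L := Real.coe_toNNReal L hL0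
    rw [hc, abs_sub_le_iff]
    constructor
    · have := hstep x hx y hy
      linarith
    · have := hstep y hy x hx
      rw [abs_sub_comm y x] at this
      linarith
  obtain ⟨μs, hμs_mem, hmin⟩ := isCompact_Icc.exists_isMinOn
    ⟨a, Set.left_mem_Icc.2 hab⟩ hlip.continuousOn
  -- h μs ≤ V
  have hminV : h μs ≤ V := by
    refine le_of_forall_pos_le_add fun ε hε => ?_
    set C : ℝ := 1 + 4 * M' with hC_def
    have hC0 : 0 < C := by positivity
    set δ : ℝ := min 1 ((ε / C) ^ 2) with hδ_def
    have hδ0 : 0 < δ := lt_min one_pos (by positivity)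
    have hδ1 : δ ≤ 1 := min_le_left _ _
    obtain ⟨Q0, hQ0⟩ := key δ hδ0 hδ1
    have h1 : h μs ≤ h (m Q0) := hmin (hmab Q0)
    have h2 : h (m Q0) ≤ V + Real.sqrt δ * C := ciSup_le fun Q1 => hQ0 Q1
    have h3 : Real.sqrt δ ≤ ε / C := by
      calc Real.sqrt δ ≤ Real.sqrt ((ε / C) ^ 2) := Real.sqrt_le_sqrt (min_le_right _ _)
        _ = ε / C := Real.sqrt_sq (by positivity)
    have h4 : Real.sqrt δ * C ≤ ε := by
      rw [← le_div_iff₀ hC0]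
      exact h3
    linarith
  refine ⟨μs, hμs_mem, ?_, ?_⟩
  · have he : (⨆ Q : 𝒫₀, ∫ x, (x - μs) ^ 2 ∂(Q : Measure ℝ)) = h μs :=
      iSup_congr fun Q => hident Q μs
    rw [he]
    exact le_antisymm hminV (hVle μs)
  · intro μ' _
    have he : (⨆ Q : 𝒫₀, ∫ x, (x - μ') ^ 2 ∂(Q : Measure ℝ)) = h μ' :=
      iSup_congr fun Q => hident Q μ'
    rw [he]
    exact hVle μ'
end

section
/- Let 𝒫₀ be a nonempty set of Borel probability measures on ℝ with sup_{Q∈𝒫₀} ∫ |x| dQ(x) < ∞, and let 𝒫 be the kernel-generated set over 𝒫₀ on the canonical space (ℝ^ℕ, ℬ(ℝ^ℕ)). Set μ̄ = sup_{Q∈𝒫₀} ∫ x dQ(x) and μ̲ = inf_{Q∈𝒫₀} ∫ x dQ(x). Then for every P ∈ 𝒫 and every i ≥ 1, μ̲ ≤ E_P[Xᵢ | ℱ_{i−1}] ≤ μ̄ P-almost surely. -/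
open MeasureTheory ProbabilityTheory Filter
open scoped ENNReal NNReal

noncomputable section

/-- The set of finite-dimensional laws on `Fin n → ℝ` built from an initial law and
probability kernels whose values lie in the prescribed sets `𝒫seq i` (the set of
possible conditional laws for the `i`-th coordinate, `0`-indexed). -/
def admissibleLaws (𝒫seq : ℕ → Set (Measure ℝ)) : (n : ℕ) → Set (Measure (Fin n → ℝ))
  | 0 => {Measure.dirac (fun i => i.elim0)}
  | n + 1 =>
    { ν | ∃ μ ∈ admissibleLaws 𝒫seq n, ∃ κ : Kernel (Fin n → ℝ) ℝ,
        IsMarkovKernel κ ∧ (∀ x, κ x ∈ 𝒫seq n) ∧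
        ν = (μ.compProd κ).map (fun p => Fin.snoc p.1 p.2) }

/-- The kernel-generated set of probability measures on the canonical space `ℝ^ℕ`:
all probability measures whose finite-dimensional marginals are obtained by iterated
integration of probability kernels taking values in `𝒫seq i`. -/
def kernelSet (𝒫seq : ℕ → Set (Measure ℝ)) : Set (Measure (ℕ → ℝ)) :=
  { P | IsProbabilityMeasure P ∧
      ∀ n : ℕ, P.map (fun ω (i : Fin n) => ω i) ∈ admissibleLaws 𝒫seq n }

/-- Canonical filtration on `ℝ^ℕ`: `canFilt i` is the σ-algebra generated by the
first `i` coordinates `X₀, …, X_{i−1}`. -/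
def canFilt (i : ℕ) : MeasurableSpace (ℕ → ℝ) :=
  MeasurableSpace.comap (fun ω (j : Fin i) => ω j) inferInstance

end

namespace CondMeanAux
open MeasureTheory ProbabilityTheory

lemma measurable_snocFun (n : ℕ) :
    Measurable (fun p : (Fin n → ℝ) × ℝ => (Fin.snoc p.1 p.2 : Fin (n+1) → ℝ)) := by
  apply measurable_pi_lambda
  intro j
  refine Fin.lastCases ?_ ?_ j
  · simp only [Fin.snoc_last]; exact measurable_snd
  · intro k; simp only [Fin.snoc_castSucc]; exact (measurable_pi_apply k).comp measurable_fst

lemma admissible_prob (𝒫seq : ℕ → Set (Measure ℝ)) :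
    ∀ n, ∀ ν ∈ admissibleLaws 𝒫seq n, IsProbabilityMeasure ν := by
  intro n
  induction n with
  | zero =>
    intro ν hν
    simp only [admissibleLaws, Set.mem_singleton_iff] at hν
    subst hν; infer_instance
  | succ n ih =>
    intro ν hν
    simp only [admissibleLaws, Set.mem_setOf_eq] at hν
    obtain ⟨μ, hμ, κ, hκM, hmem, rfl⟩ := hν
    haveI := ih μ hμ
    haveI := hκM
    exact Measure.isProbabilityMeasure_map (measurable_snocFun n).aemeasurable

lemma integrable_id_of_mom {Q : Measure ℝ} {M : ℝ}
    (h : ∫⁻ x, ENNReal.ofReal |x| ∂Q ≤ ENNReal.ofReal M) :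
    Integrable (fun x : ℝ => x) Q := by
  refine ⟨aestronglyMeasurable_id, ?_⟩
  have : ∫⁻ x, (‖x‖₊ : ℝ≥0∞) ∂Q = ∫⁻ x, ENNReal.ofReal |x| ∂Q := by
    congr 1; funext x; rw [← Real.norm_eq_abs, ofReal_norm, enorm_eq_nnnorm]
  simpa [HasFiniteIntegral, enorm_eq_nnnorm, this] using lt_of_le_of_lt h ENNReal.ofReal_lt_top

lemma integral_abs_le_of_mom {Q : Measure ℝ} {M : ℝ} (hM : 0 ≤ M) [IsProbabilityMeasure Q]
    (h : ∫⁻ x, ENNReal.ofReal |x| ∂Q ≤ ENNReal.ofReal M) :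
    ∫ x, |x| ∂Q ≤ M := by
  rw [integral_eq_lintegral_of_nonneg_ae (ae_of_all _ fun x => abs_nonneg x)
      measurable_abs.aestronglyMeasurable]
  calc (∫⁻ x, ENNReal.ofReal |x| ∂Q).toReal ≤ (ENNReal.ofReal M).toReal :=
        ENNReal.toReal_mono ENNReal.ofReal_ne_top h
    _ = M := ENNReal.toReal_ofReal hM

lemma mean_abs_le_of_mom {Q : Measure ℝ} {M : ℝ} (hM : 0 ≤ M) [IsProbabilityMeasure Q]
    (h : ∫⁻ x, ENNReal.ofReal |x| ∂Q ≤ ENNReal.ofReal M) :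
    |∫ x, x ∂Q| ≤ M := by
  simpa [Real.norm_eq_abs] using (norm_integral_le_integral_norm (μ := Q) (fun x : ℝ => x)).trans
    (by simpa [Real.norm_eq_abs] using integral_abs_le_of_mom hM h)

end CondMeanAux

/-- For a kernel-generated set `𝒫` over `𝒫₀` (uniformly bounded first
moments), for every `P ∈ 𝒫` and every coordinate `Xᵢ`, the conditional mean
`E_P[Xᵢ | ℱ_{i−1}]` lies `P`-a.s. between `μ̲ = inf_{Q∈𝒫₀} ∫ x dQ` and
`μ̄ = sup_{Q∈𝒫₀} ∫ x dQ`. -/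
theorem conditional_mean_bounds
    (𝒫₀ : Set (Measure ℝ)) (hne : 𝒫₀.Nonempty)
    (hprob : ∀ Q ∈ 𝒫₀, IsProbabilityMeasure Q)
    (hmom : ∃ M : ℝ, ∀ Q ∈ 𝒫₀, ∫⁻ x, ENNReal.ofReal |x| ∂Q ≤ ENNReal.ofReal M)
    (P : Measure (ℕ → ℝ)) (hP : P ∈ kernelSet fun _ => 𝒫₀) (i : ℕ) :
    ∀ᵐ ω ∂P,
      (⨅ Q : 𝒫₀, ∫ x, x ∂(Q : Measure ℝ)) ≤ (P[fun ω' => ω' i | canFilt i]) ω ∧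
      (P[fun ω' => ω' i | canFilt i]) ω ≤ ⨆ Q : 𝒫₀, ∫ x, x ∂(Q : Measure ℝ) := by
  classical
  obtain ⟨M₀, hM₀⟩ := hmom
  set M : ℝ := max M₀ 0 with hMdef
  have hM0 : (0:ℝ) ≤ M := le_max_right _ _
  have hmomM : ∀ Q ∈ 𝒫₀, ∫⁻ x, ENNReal.ofReal |x| ∂Q ≤ ENNReal.ofReal M := fun Q hQ =>
    (hM₀ Q hQ).trans (ENNReal.ofReal_le_ofReal (le_max_left _ _))
  haveI hPprob : IsProbabilityMeasure P := hP.1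
  -- projections
  have hπm : ∀ n : ℕ, Measurable (fun (ω : ℕ → ℝ) (j : Fin n) => ω j) := fun n =>
    measurable_pi_lambda _ fun j => measurable_pi_apply _
  -- decompose the (i+1)-marginal
  have hdecomp := hP.2 (i+1)
  simp only [admissibleLaws, Set.mem_setOf_eq] at hdecomp
  obtain ⟨μ, hμmem, κ, hκMarkov, hκmem, hν⟩ := hdecomp
  haveI := hκMarkov
  haveI hμprob : IsProbabilityMeasure μ := CondMeanAux.admissible_prob _ i μ hμmem
  haveI : ∀ y, IsProbabilityMeasure (κ y) := fun y => hprob _ (hκmem y)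
  -- marginal identity: P.map π_i = μ
  have hinit_m : Measurable (fun z : Fin (i+1) → ℝ => (Fin.init z : Fin i → ℝ)) :=
    measurable_pi_lambda _ fun j => measurable_pi_apply _
  have hcomp : (fun (ω : ℕ → ℝ) (j : Fin i) => ω j)
      = (fun z : Fin (i+1) → ℝ => (Fin.init z : Fin i → ℝ)) ∘ (fun (ω : ℕ → ℝ) (j : Fin (i+1)) => ω j) := by
    funext ω j; simp [Fin.init]
  have hmapμ : P.map (fun (ω : ℕ → ℝ) (j : Fin i) => ω j) = μ := by
    rw [hcomp, ← Measure.map_map hinit_m (hπm (i+1)), hν,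
      Measure.map_map hinit_m (CondMeanAux.measurable_snocFun i)]
    have h1 : (fun z : Fin (i+1) → ℝ => (Fin.init z : Fin i → ℝ))
        ∘ (fun p : (Fin i → ℝ) × ℝ => (Fin.snoc p.1 p.2 : Fin (i+1) → ℝ))
        = Prod.fst := by
      funext p; simp [Fin.init_snoc]
    rw [h1, show (μ.compProd κ).map Prod.fst = (μ.compProd κ).fst from rfl,
      Measure.fst_compProd]
  -- the conditional mean function
  set f : (Fin i → ℝ) → ℝ := fun y => ∫ x, x ∂(κ y) with hfdef
  have hf_sm : StronglyMeasurable f := by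
    have h : StronglyMeasurable (Function.uncurry fun (_ : Fin i → ℝ) (x : ℝ) => x) :=
      measurable_snd.stronglyMeasurable
    exact h.integral_kernel_prod_right
  have hbddA : BddAbove (Set.range fun Q : 𝒫₀ => ∫ x, x ∂(Q : Measure ℝ)) := by
    refine ⟨M, ?_⟩
    rintro _ ⟨Q, rfl⟩
    haveI := hprob _ Q.2
    exact (abs_le.1 (CondMeanAux.mean_abs_le_of_mom hM0 (hmomM _ Q.2))).2
  have hbddB : BddBelow (Set.range fun Q : 𝒫₀ => ∫ x, x ∂(Q : Measure ℝ)) := by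
    refine ⟨-M, ?_⟩
    rintro _ ⟨Q, rfl⟩
    haveI := hprob _ Q.2
    exact (abs_le.1 (CondMeanAux.mean_abs_le_of_mom hM0 (hmomM _ Q.2))).1
  have hf_le : ∀ y, f y ≤ ⨆ Q : 𝒫₀, ∫ x, x ∂(Q : Measure ℝ) := fun y =>
    le_ciSup hbddA (⟨κ y, hκmem y⟩ : 𝒫₀)
  have hf_ge : ∀ y, (⨅ Q : 𝒫₀, ∫ x, x ∂(Q : Measure ℝ)) ≤ f y := fun y =>
    ciInf_le hbddB (⟨κ y, hκmem y⟩ : 𝒫₀)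
  have hf_abs : ∀ y, |f y| ≤ M := fun y => by
    haveI := hprob _ (hκmem y)
    exact CondMeanAux.mean_abs_le_of_mom hM0 (hmomM _ (hκmem y))
  -- σ-algebra inequality
  have hm : canFilt i ≤ (inferInstance : MeasurableSpace (ℕ → ℝ)) := (hπm i).comap_le
  haveI : SigmaFinite (P.trim hm) := by
    haveI : IsFiniteMeasure (P.trim hm) := isFiniteMeasure_trim hm
    infer_instance
  -- X_i integrable
  have hXi_meas : Measurable (fun ω : ℕ → ℝ => ω i) := measurable_pi_apply i
  have hlast : (fun ω : ℕ → ℝ => ω i)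
      = (fun z : Fin (i+1) → ℝ => z (Fin.last i)) ∘ (fun (ω : ℕ → ℝ) (j : Fin (i+1)) => ω j) := by
    funext ω; simp
  have hnn : ∀ x : ℝ, (‖x‖₊ : ℝ≥0∞) = ENNReal.ofReal |x| := fun x => by
    rw [← Real.norm_eq_abs, ofReal_norm, enorm_eq_nnnorm]
  have hXi_int : Integrable (fun ω : ℕ → ℝ => ω i) P := by
    refine ⟨hXi_meas.aestronglyMeasurable, ?_⟩
    have hcalc : ∫⁻ ω, (‖ω i‖₊ : ℝ≥0∞) ∂P ≤ ENNReal.ofReal M := by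
      calc ∫⁻ ω, (‖ω i‖₊ : ℝ≥0∞) ∂P
          = ∫⁻ z, (‖z (Fin.last i)‖₊ : ℝ≥0∞) ∂(P.map (fun (ω : ℕ → ℝ) (j : Fin (i+1)) => ω j)) := by
            rw [lintegral_map (measurable_pi_apply _).nnnorm.coe_nnreal_ennreal (hπm (i+1))]
            simp [hlast]
        _ = ∫⁻ p, (‖p.2‖₊ : ℝ≥0∞) ∂(μ.compProd κ) := by
            rw [hν, lintegral_map (measurable_pi_apply _).nnnorm.coe_nnreal_ennreal (CondMeanAux.measurable_snocFun i)]
            simp [Fin.snoc_last]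
        _ = ∫⁻ y, ∫⁻ x, (‖x‖₊ : ℝ≥0∞) ∂(κ y) ∂μ :=
            Measure.lintegral_compProd measurable_snd.nnnorm.coe_nnreal_ennreal
        _ ≤ ∫⁻ _, ENNReal.ofReal M ∂μ := by
            refine lintegral_mono fun y => ?_
            simp only [hnn]
            exact hmomM _ (hκmem y)
        _ = ENNReal.ofReal M := by simp
    exact lt_of_le_of_lt hcalc ENNReal.ofReal_lt_top
  -- snd integrable on compProd
  have habs_sm : StronglyMeasurable fun y : Fin i → ℝ => ∫ x, ‖x‖ ∂(κ y) := by
    have h : StronglyMeasurable (Function.uncurry fun (_ : Fin i → ℝ) (x : ℝ) => ‖x‖) :=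
      measurable_snd.norm.stronglyMeasurable
    exact h.integral_kernel_prod_right
  have hsnd_int : Integrable (fun p : (Fin i → ℝ) × ℝ => p.2) (μ.compProd κ) := by
    rw [Measure.integrable_compProd_iff measurable_snd.aestronglyMeasurable]
    constructor
    · exact ae_of_all _ fun y => CondMeanAux.integrable_id_of_mom (hmomM _ (hκmem y))
    · refine Integrable.mono' (integrable_const M) habs_sm.aestronglyMeasurable
        (ae_of_all _ fun y => ?_)
      rw [Real.norm_eq_abs, abs_of_nonneg (integral_nonneg fun x => norm_nonneg x)]
      haveI := hprob _ (hκmem y)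
      simpa [Real.norm_eq_abs] using CondMeanAux.integral_abs_le_of_mom hM0 (hmomM _ (hκmem y))
  -- g and its properties
  set g : (ℕ → ℝ) → ℝ := fun ω => f (fun j : Fin i => ω j) with hgdef
  have hπi_f : Measurable[canFilt i] (fun (ω : ℕ → ℝ) (j : Fin i) => ω j) :=
    measurable_iff_comap_le.2 le_rfl
  have hg_sm : StronglyMeasurable[canFilt i] g := hf_sm.comp_measurable hπi_f
  have hg_int : Integrable g P := by
    refine Integrable.mono' (integrable_const M) ((hg_sm.mono hm).aestronglyMeasurable)
      (ae_of_all _ fun ω => ?_)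
    simpa [Real.norm_eq_abs] using hf_abs _
  -- set-integral equality
  have hg_eq : ∀ s : Set (ℕ → ℝ), MeasurableSet[canFilt i] s → P s < ⊤ →
      ∫ ω in s, g ω ∂P = ∫ ω in s, ω i ∂P := by
    rintro s ⟨B, hB, rfl⟩ _
    -- LHS
    have hL : ∫ ω in (fun (ω : ℕ → ℝ) (j : Fin i) => ω j) ⁻¹' B, g ω ∂P = ∫ y in B, f y ∂μ := by
      rw [← hmapμ, setIntegral_map hB (hf_sm.aestronglyMeasurable) (hπm i).aemeasurable]
    rw [hL]
    -- RHS
    have hBinit : MeasurableSet ((fun z : Fin (i+1) → ℝ => (Fin.init z : Fin i → ℝ)) ⁻¹' B) :=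
      hinit_m hB
    have hpre : (fun (ω : ℕ → ℝ) (j : Fin i) => ω j) ⁻¹' B
        = (fun (ω : ℕ → ℝ) (j : Fin (i+1)) => ω j) ⁻¹'
            ((fun z : Fin (i+1) → ℝ => (Fin.init z : Fin i → ℝ)) ⁻¹' B) := by
      rw [← Set.preimage_comp, ← hcomp]
    have hR : ∫ ω in (fun (ω : ℕ → ℝ) (j : Fin i) => ω j) ⁻¹' B, ω i ∂P
        = ∫ p in B ×ˢ Set.univ, p.2 ∂(μ.compProd κ) := by
      rw [hpre]
      have h2 : ∫ ω in (fun (ω : ℕ → ℝ) (j : Fin (i+1)) => ω j) ⁻¹'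
            ((fun z : Fin (i+1) → ℝ => (Fin.init z : Fin i → ℝ)) ⁻¹' B), ω i ∂P
          = ∫ z in (fun z : Fin (i+1) → ℝ => (Fin.init z : Fin i → ℝ)) ⁻¹' B,
              z (Fin.last i) ∂(P.map (fun (ω : ℕ → ℝ) (j : Fin (i+1)) => ω j)) := by
        rw [setIntegral_map hBinit (measurable_pi_apply _).aestronglyMeasurable
          (hπm (i+1)).aemeasurable]
        refine setIntegral_congr_fun ?_ fun ω _ => ?_
        · exact (hπm (i+1)) hBinit
        · simp
      rw [h2, hν, setIntegral_map hBinit (measurable_pi_apply _).aestronglyMeasurable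
        (CondMeanAux.measurable_snocFun i).aemeasurable]
      have hset : (fun p : (Fin i → ℝ) × ℝ => (Fin.snoc p.1 p.2 : Fin (i+1) → ℝ)) ⁻¹'
          ((fun z : Fin (i+1) → ℝ => (Fin.init z : Fin i → ℝ)) ⁻¹' B) = B ×ˢ Set.univ := by
        ext p; simp [Fin.init_snoc]
      rw [hset]
      refine setIntegral_congr_fun ((hB.prod MeasurableSet.univ)) fun p _ => ?_
      simp [Fin.snoc_last]
    rw [hR, Measure.setIntegral_compProd hB MeasurableSet.univ hsnd_int.integrableOn]
    simp only [Measure.restrict_univ]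
    rfl
  -- conclude
  have hcond : g =ᵐ[P] P[fun ω' => ω' i | canFilt i] := by
    refine ae_eq_condExp_of_forall_setIntegral_eq hm hXi_int
      (fun s _ _ => hg_int.integrableOn) hg_eq ?_
    exact StronglyMeasurable.aestronglyMeasurable hg_sm
  filter_upwards [hcond] with ω hω
  rw [← hω]
  exact ⟨hf_ge _, hf_le _⟩
end

section
/- Let W^L and W^R be bounded random variables on a probability space (Ω₀, 𝒜, P), with means μ_L = E[W^L], μ_R = E[W^R] and variances σ_L² = Var(W^L), σ_R² = Var(W^R). Define 𝒫₀ to be the set of all Borel probability measures ν on ℝ such that ∫ φ dν ≤ max(E[φ(W^L)], E[φ(W^R)]) for every Lipschitz function φ : ℝ → ℝ. Then: (1) sup_{ν∈𝒫₀} ∫ x dν = μ_L ∨ μ_R and inf_{ν∈𝒫₀} ∫ x dν = μ_L ∧ μ_R; (2) inf_{ν∈𝒫₀} Var_ν = σ_L² ∧ σ_R²; (3) if μ_L = μ_R then sup_{ν∈𝒫₀} Var_ν = σ_L² ∨ σ_R²; (4) if μ_L ≠ μ_R and |σ_L² − σ_R²| ≤ (μ_L − μ_R)², then sup_{ν∈𝒫₀}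 Var_ν = (1/4)[(μ_L−μ_R)² + ((σ_L²−σ_R²)/(μ_L−μ_R))²] + (σ_L²+σ_R²)/2. -/
open MeasureTheory ProbabilityTheory Filter
open scoped ENNReal NNReal

noncomputable def clampM (M : ℝ) : ℝ → ℝ := fun x => max (min x M) (-M)

lemma clampM_lip (M : ℝ) : LipschitzWith 1 (clampM M) :=
  (LipschitzWith.id.min_const M).max_const (-M)

lemma clampM_abs_le {M : ℝ} (hM : 0 ≤ M) (x : ℝ) : |clampM M x| ≤ M := by
  rw [abs_le]
  constructor
  · exact le_max_right _ _
  · exact max_le (min_le_right _ _) (by linarith)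

lemma clampM_eq_self {M x : ℝ} (hx : |x| ≤ M) : clampM M x = x := by
  rw [abs_le] at hx
  unfold clampM
  rw [min_eq_left hx.2, max_eq_left hx.1]

lemma lip_clamp_sq (M a : ℝ) (hM : 0 ≤ M) :
    LipschitzWith ⟨2 * (M + |a|), by positivity⟩ (fun x => (clampM M x - a) ^ 2) := by
  apply LipschitzWith.of_dist_le_mul
  intro x y
  have hc : dist (clampM M x) (clampM M y) ≤ dist x y := by
    simpa using (clampM_lip M).dist_le_mul x y
  rw [Real.dist_eq] at hc ⊢
  rw [Real.dist_eq]
  have h1 : |clampM M x| ≤ M := clampM_abs_le hM x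
  have h2 : |clampM M y| ≤ M := clampM_abs_le hM y
  have key : (clampM M x - a) ^ 2 - (clampM M y - a) ^ 2
      = (clampM M x - clampM M y) * (clampM M x + clampM M y - 2 * a) := by ring
  rw [key, abs_mul]
  push_cast
  have hb : |clampM M x + clampM M y - 2 * a| ≤ 2 * (M + |a|) := by
    have := abs_add_le (clampM M x + clampM M y) (-(2*a))
    have h3 : |(-(2*a))| = 2*|a| := by rw [abs_neg, abs_mul]; simp
    have h4 : |clampM M x + clampM M y| ≤ 2*M := le_trans (abs_add_le _ _) (by linarith)
    calc |clampM M x + clampM M y - 2 * a| = |clampM M x + clampM M y + (-(2*a))| := by ring_nf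
      _ ≤ |clampM M x + clampM M y| + |(-(2*a))| := abs_add_le _ _
      _ ≤ 2*(M + |a|) := by rw [h3]; linarith
  calc |(clampM M x - clampM M y)| * |clampM M x + clampM M y - 2 * a|
      ≤ |x - y| * (2*(M+|a|)) := by
        apply mul_le_mul hc hb (abs_nonneg _) (abs_nonneg _)
    _ = 2*(M+|a|) * |x - y| := by ring

lemma integral_sub_sq_eq {Ω : Type*} [MeasurableSpace Ω] (P : Measure Ω) [IsProbabilityMeasure P]
    {W : Ω → ℝ} (hW : MemLp W 2 P) (a : ℝ) :
    ∫ ω, (W ω - a) ^ 2 ∂P = variance W P + ((∫ ω, W ω ∂P) - a) ^ 2 := by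
  have h2 : Integrable (fun ω => W ω ^ 2) P := hW.integrable_sq
  have h1 : Integrable W P := hW.integrable one_le_two
  have hv := variance_eq_sub hW
  simp only [Pi.pow_apply] at hv
  have he : (fun ω => (W ω - a) ^ 2) = fun ω => (W ω ^ 2 - (2*a) * W ω) + a ^ 2 :=
    funext fun ω => by ring
  have hsub : Integrable (fun ω => W ω ^ 2 - (2*a) * W ω) P := by
    exact h2.sub (h1.const_mul (2*a))
  rw [he, integral_add hsub (integrable_const _),
    integral_sub h2 (h1.const_mul _), MeasureTheory.integral_const_mul, integral_const]
  simp only [measure_univ, ENNReal.toReal_one, smul_eq_mul, one_mul, probReal_univ, mul_one]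
  rw [hv]; ring

lemma lip_neg {f : ℝ → ℝ} {K : ℝ≥0} (hf : LipschitzWith K f) :
    LipschitzWith K (fun x => -(f x)) := by
  apply LipschitzWith.of_dist_le_mul
  intro x y
  have := hf.dist_le_mul x y
  simpa [Real.dist_eq, abs_sub_comm, neg_sub_neg] using this

lemma bounded_integrable {Ω : Type*} [MeasurableSpace Ω] (P : Measure Ω) [IsProbabilityMeasure P]
    {f : Ω → ℝ} (hm : AEStronglyMeasurable f P) {C : ℝ} (hb : ∀ᵐ ω ∂P, |f ω| ≤ C) :
    Integrable f P := by
  refine (memLp_top_of_bound hm C ?_).integrable le_top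
  simpa [Real.norm_eq_abs] using hb

lemma bounded_memℒp2 {Ω : Type*} [MeasurableSpace Ω] (P : Measure Ω) [IsProbabilityMeasure P]
    {f : Ω → ℝ} (hm : AEStronglyMeasurable f P) {C : ℝ} (hb : ∀ᵐ ω ∂P, |f ω| ≤ C) :
    MemLp f 2 P := by
  refine (memLp_top_of_bound hm C ?_).mono_exponent le_top
  simpa [Real.norm_eq_abs] using hb

lemma bandit_nu_facts {Ω₀ : Type*} [MeasurableSpace Ω₀] (P : Measure Ω₀) [IsProbabilityMeasure P]
    (WL WR : Ω₀ → ℝ) (M : ℝ) (hM : 0 ≤ M)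
    (hL : ∀ ω, |WL ω| ≤ M) (hR : ∀ ω, |WR ω| ≤ M)
    (hmL : MemLp WL 2 P) (hmR : MemLp WR 2 P)
    (ν : Measure ℝ) (hprob : IsProbabilityMeasure ν)
    (hdom : ∀ φ : ℝ → ℝ, (∃ L : ℝ≥0, LipschitzWith L φ) →
        ∫ x, φ x ∂ν ≤ max (∫ ω, φ (WL ω) ∂P) (∫ ω, φ (WR ω) ∂P)) :
    MemLp id 2 ν ∧
    (min (∫ ω, WL ω ∂P) (∫ ω, WR ω ∂P) ≤ ∫ x, x ∂ν ∧
      ∫ x, x ∂ν ≤ max (∫ ω, WL ω ∂P) (∫ ω, WR ω ∂P)) ∧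
    min (variance WL P) (variance WR P) ≤ variance id ν ∧
    ∀ a : ℝ, variance id ν ≤
      max (variance WL P + ((∫ ω, WL ω ∂P) - a) ^ 2)
        (variance WR P + ((∫ ω, WR ω ∂P) - a) ^ 2) := by
  haveI := hprob
  -- support of ν is in [-M, M]
  set φ₀ : ℝ → ℝ := fun x => min (max (‖x‖ - M) 0) 1 with hφ₀
  have lip₀ : LipschitzWith 1 φ₀ := by
    have h1 : LipschitzWith 1 (fun x : ℝ => ‖x‖ - M) := by
      apply LipschitzWith.of_dist_le_mul
      intro x y
      simpa [Real.dist_eq] using lipschitzWith_one_norm.dist_le_mul x y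
    exact (h1.max_const 0).min_const 1
  have hφ₀nonneg : ∀ x, 0 ≤ φ₀ x := fun x => le_min (le_max_right _ _) zero_le_one
  have hφ₀zero : ∀ x : ℝ, |x| ≤ M → φ₀ x = 0 := by
    intro x hx
    have h1 : |x| - M ≤ 0 := by linarith
    simp [hφ₀, Real.norm_eq_abs, max_eq_right h1]
  have hφ₀int : Integrable φ₀ ν := by
    apply bounded_integrable ν lip₀.continuous.aestronglyMeasurable (C := 1)
    filter_upwards with x
    rw [abs_of_nonneg (hφ₀nonneg x)]
    exact min_le_right _ _
  have hae : ∀ᵐ x ∂ν, |x| ≤ M := by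
    have hle := hdom φ₀ ⟨1, lip₀⟩
    have hz : ∀ ω, φ₀ (WL ω) = 0 := fun ω => hφ₀zero _ (hL ω)
    have hz' : ∀ ω, φ₀ (WR ω) = 0 := fun ω => hφ₀zero _ (hR ω)
    simp only [hz, hz', integral_zero, max_self] at hle
    have hge : 0 ≤ ∫ x, φ₀ x ∂ν := integral_nonneg hφ₀nonneg
    have h0 : ∫ x, φ₀ x ∂ν = 0 := le_antisymm hle hge
    have := (integral_eq_zero_iff_of_nonneg_ae (Eventually.of_forall hφ₀nonneg) hφ₀int).1 h0
    filter_upwards [this] with x hx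
    by_contra hc
    push_neg at hc
    have : φ₀ x > 0 := by
      have h1 : ‖x‖ - M > 0 := by rw [Real.norm_eq_abs]; linarith
      have : max (‖x‖ - M) 0 > 0 := lt_max_of_lt_left h1
      exact lt_min this one_pos
    simp only [Pi.zero_apply] at hx
    linarith
  have mem2 : MemLp id 2 ν := by
    apply bounded_memℒp2 ν aestronglyMeasurable_id (C := M)
    exact hae
  -- mean bounds
  have hmean_ub : ∫ x, x ∂ν ≤ max (∫ ω, WL ω ∂P) (∫ ω, WR ω ∂P) :=
    hdom (fun x => x) ⟨1, LipschitzWith.id⟩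
  have hmean_lb : min (∫ ω, WL ω ∂P) (∫ ω, WR ω ∂P) ≤ ∫ x, x ∂ν := by
    have hle := hdom (fun x => -x) ⟨1, lip_neg LipschitzWith.id⟩
    rw [integral_neg, integral_neg, integral_neg, max_neg_neg] at hle
    linarith
  -- quadratic bounds
  have hquad : ∀ a : ℝ, ∫ x, (x - a) ^ 2 ∂ν
      ≤ max (∫ ω, (WL ω - a) ^ 2 ∂P) (∫ ω, (WR ω - a) ^ 2 ∂P) := by
    intro a
    have hle := hdom (fun x => (clampM M x - a) ^ 2) ⟨_, lip_clamp_sq M a hM⟩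
    have e1 : ∫ ω, (clampM M (WL ω) - a) ^ 2 ∂P = ∫ ω, (WL ω - a) ^ 2 ∂P :=
      integral_congr_ae (Eventually.of_forall fun ω => by simp [clampM_eq_self (hL ω)])
    have e2 : ∫ ω, (clampM M (WR ω) - a) ^ 2 ∂P = ∫ ω, (WR ω - a) ^ 2 ∂P :=
      integral_congr_ae (Eventually.of_forall fun ω => by simp [clampM_eq_self (hR ω)])
    have e3 : ∫ x, (clampM M x - a) ^ 2 ∂ν = ∫ x, (x - a) ^ 2 ∂ν :=
      integral_congr_ae (hae.mono fun x hx => by simp [clampM_eq_self hx])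
    rw [e1, e2, e3] at hle
    exact hle
  have hquad' : ∀ a : ℝ, min (∫ ω, (WL ω - a) ^ 2 ∂P) (∫ ω, (WR ω - a) ^ 2 ∂P)
      ≤ ∫ x, (x - a) ^ 2 ∂ν := by
    intro a
    have hle := hdom (fun x => -((clampM M x - a) ^ 2)) ⟨_, lip_neg (lip_clamp_sq M a hM)⟩
    rw [integral_neg, integral_neg, integral_neg] at hle
    have e1 : ∫ ω, (clampM M (WL ω) - a) ^ 2 ∂P = ∫ ω, (WL ω - a) ^ 2 ∂P :=
      integral_congr_ae (Eventually.of_forall fun ω => by simp [clampM_eq_self (hL ω)])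
    have e2 : ∫ ω, (clampM M (WR ω) - a) ^ 2 ∂P = ∫ ω, (WR ω - a) ^ 2 ∂P :=
      integral_congr_ae (Eventually.of_forall fun ω => by simp [clampM_eq_self (hR ω)])
    have e3 : ∫ x, (clampM M x - a) ^ 2 ∂ν = ∫ x, (x - a) ^ 2 ∂ν :=
      integral_congr_ae (hae.mono fun x hx => by simp [clampM_eq_self hx])
    rw [e1, e2, e3, max_neg_neg] at hle
    linarith
  have hνsq : ∀ a : ℝ, ∫ x, (x - a) ^ 2 ∂ν = variance id ν + ((∫ x, x ∂ν) - a) ^ 2 :=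
    fun a => integral_sub_sq_eq ν mem2 a
  have hLsq : ∀ a : ℝ, ∫ ω, (WL ω - a) ^ 2 ∂P = variance WL P + ((∫ ω, WL ω ∂P) - a) ^ 2 :=
    fun a => integral_sub_sq_eq P hmL a
  have hRsq : ∀ a : ℝ, ∫ ω, (WR ω - a) ^ 2 ∂P = variance WR P + ((∫ ω, WR ω ∂P) - a) ^ 2 :=
    fun a => integral_sub_sq_eq P hmR a
  refine ⟨mem2, ⟨hmean_lb, hmean_ub⟩, ?_, ?_⟩
  · -- lower variance bound
    have h := hquad' (∫ x, x ∂ν)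
    rw [hνsq, hLsq, hRsq] at h
    simp only [sub_self] at h
    have : min (variance WL P) (variance WR P)
        ≤ min (variance WL P + ((∫ ω, WL ω ∂P) - ∫ x, x ∂ν) ^ 2)
          (variance WR P + ((∫ ω, WR ω ∂P) - ∫ x, x ∂ν) ^ 2) :=
      min_le_min (by nlinarith [sq_nonneg ((∫ ω, WL ω ∂P) - ∫ x, x ∂ν)])
        (by nlinarith [sq_nonneg ((∫ ω, WR ω ∂P) - ∫ x, x ∂ν)])
    calc min (variance WL P) (variance WR P) ≤ _ := this
      _ ≤ variance id ν + (0:ℝ) ^ 2 := h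
      _ = variance id ν := by ring
  · intro a
    have h := hquad a
    rw [hνsq, hLsq, hRsq] at h
    nlinarith [sq_nonneg ((∫ x, x ∂ν) - a)]

lemma lip_integrable_map {Ω₀ : Type*} [MeasurableSpace Ω₀] (P : Measure Ω₀)
    [IsProbabilityMeasure P] {W : Ω₀ → ℝ} (hWm : Measurable W) {M : ℝ}
    (hW : ∀ ω, |W ω| ≤ M) {φ : ℝ → ℝ} {K : ℝ≥0} (hφ : LipschitzWith K φ) :
    Integrable φ (P.map W) := by
  rw [integrable_map_measure hφ.continuous.aestronglyMeasurable hWm.aemeasurable]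
  apply bounded_integrable P ((hφ.continuous.measurable.comp hWm).aestronglyMeasurable)
    (C := |φ 0| + K * M)
  filter_upwards with ω
  have h := hφ.dist_le_mul (W ω) 0
  rw [Real.dist_eq, Real.dist_eq, sub_zero] at h
  have h2 : |φ (W ω)| - |φ 0| ≤ |φ (W ω) - φ 0| := abs_sub_abs_le_abs_sub _ _
  have hK : (K : ℝ) * |W ω| ≤ (K : ℝ) * M := mul_le_mul_of_nonneg_left (hW ω) K.coe_nonneg
  show |φ (W ω)| ≤ |φ 0| + (K : ℝ) * M
  linarith

lemma mix_prob (μ κ : Measure ℝ) [IsProbabilityMeasure μ] [IsProbabilityMeasure κ]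
    (l : ℝ) (hl0 : 0 ≤ l) (hl1 : l ≤ 1) :
    IsProbabilityMeasure ((ENNReal.ofReal l) • μ + (ENNReal.ofReal (1 - l)) • κ) := by
  constructor
  rw [Measure.add_apply, Measure.smul_apply, Measure.smul_apply]
  simp only [smul_eq_mul, measure_univ, mul_one]
  rw [← ENNReal.ofReal_add hl0 (by linarith), show l + (1 - l) = 1 by ring, ENNReal.ofReal_one]

lemma integral_mix (μ κ : Measure ℝ) {f : ℝ → ℝ} (l : ℝ) (hl0 : 0 ≤ l) (hl1 : l ≤ 1)
    (hf1 : Integrable f μ) (hf2 : Integrable f κ) :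
    ∫ x, f x ∂((ENNReal.ofReal l) • μ + (ENNReal.ofReal (1 - l)) • κ)
      = l * ∫ x, f x ∂μ + (1 - l) * ∫ x, f x ∂κ := by
  rw [integral_add_measure (hf1.smul_measure ENNReal.ofReal_ne_top)
      (hf2.smul_measure ENNReal.ofReal_ne_top),
    integral_smul_measure, integral_smul_measure,
    ENNReal.toReal_ofReal hl0, ENNReal.toReal_ofReal (by linarith)]
  simp [smul_eq_mul]

/-- For the two-armed bandit set
`𝒫₀ = {ν : ∫ φ dν ≤ max(E[φ(W^L)], E[φ(W^R)]) for all Lipschitz φ}`: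
the upper/lower means are `μ_L ∨ μ_R` and `μ_L ∧ μ_R`, the lower variance is
`σ_L² ∧ σ_R²`, and the upper variance is `σ_L² ∨ σ_R²` if `μ_L = μ_R`, and
`¼[(μ_L−μ_R)² + ((σ_L²−σ_R²)/(μ_L−μ_R))²] + (σ_L²+σ_R²)/2` if `μ_L ≠ μ_R`
(under `|σ_L² − σ_R²| ≤ (μ_L − μ_R)²`). -/
theorem two_armed_bandit_mean_variance
    {Ω₀ : Type*} [MeasurableSpace Ω₀] (P : Measure Ω₀) [IsProbabilityMeasure P]
    (WL WR : Ω₀ → ℝ) (hWLm : Measurable WL) (hWRm : Measurable WR)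
    (hWLb : ∃ M : ℝ, ∀ ω, |WL ω| ≤ M) (hWRb : ∃ M : ℝ, ∀ ω, |WR ω| ≤ M)
    (𝒫₀ : Set (Measure ℝ))
    (h𝒫₀ : 𝒫₀ = { ν : Measure ℝ | IsProbabilityMeasure ν ∧
      ∀ φ : ℝ → ℝ, (∃ L : ℝ≥0, LipschitzWith L φ) →
        ∫ x, φ x ∂ν ≤ max (∫ ω, φ (WL ω) ∂P) (∫ ω, φ (WR ω) ∂P) }) :
    (⨆ ν : 𝒫₀, ∫ x, x ∂(ν : Measure ℝ)) = max (∫ ω, WL ω ∂P) (∫ ω, WR ω ∂P) ∧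
    (⨅ ν : 𝒫₀, ∫ x, x ∂(ν : Measure ℝ)) = min (∫ ω, WL ω ∂P) (∫ ω, WR ω ∂P) ∧
    (⨅ ν : 𝒫₀, variance id (ν : Measure ℝ)) = min (variance WL P) (variance WR P) ∧
    ((∫ ω, WL ω ∂P) = (∫ ω, WR ω ∂P) →
      (⨆ ν : 𝒫₀, variance id (ν : Measure ℝ)) = max (variance WL P) (variance WR P)) ∧
    ((∫ ω, WL ω ∂P) ≠ (∫ ω, WR ω ∂P) →
      |variance WL P - variance WR P| ≤ ((∫ ω, WL ω ∂P) - ∫ ω, WR ω ∂P) ^ 2 →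
      (⨆ ν : 𝒫₀, variance id (ν : Measure ℝ))
        = (1 / 4) * (((∫ ω, WL ω ∂P) - ∫ ω, WR ω ∂P) ^ 2
            + ((variance WL P - variance WR P) / ((∫ ω, WL ω ∂P) - ∫ ω, WR ω ∂P)) ^ 2)
          + (variance WL P + variance WR P) / 2) := by
  obtain ⟨ML, hML⟩ := hWLb
  obtain ⟨MR, hMR⟩ := hWRb
  have hM : (0:ℝ) ≤ max (max ML MR) 0 := le_max_right _ _
  have hL : ∀ ω, |WL ω| ≤ max (max ML MR) 0 :=
    fun ω => le_trans (hML ω) (le_max_of_le_left (le_max_left _ _))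
  have hR : ∀ ω, |WR ω| ≤ max (max ML MR) 0 :=
    fun ω => le_trans (hMR ω) (le_max_of_le_left (le_max_right _ _))
  have hmL : MemLp WL 2 P :=
    bounded_memℒp2 P hWLm.aestronglyMeasurable (Eventually.of_forall hL)
  have hmR : MemLp WR 2 P :=
    bounded_memℒp2 P hWRm.aestronglyMeasurable (Eventually.of_forall hR)
  haveI instL : IsProbabilityMeasure (P.map WL) := Measure.isProbabilityMeasure_map hWLm.aemeasurable
  haveI instR : IsProbabilityMeasure (P.map WR) := Measure.isProbabilityMeasure_map hWRm.aemeasurable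
  have hLmem : P.map WL ∈ 𝒫₀ := by
    rw [h𝒫₀]
    refine ⟨instL, fun φ hφ => ?_⟩
    obtain ⟨K, hK⟩ := hφ
    rw [integral_map hWLm.aemeasurable hK.continuous.aestronglyMeasurable]
    exact le_max_left _ _
  have hRmem : P.map WR ∈ 𝒫₀ := by
    rw [h𝒫₀]
    refine ⟨instR, fun φ hφ => ?_⟩
    obtain ⟨K, hK⟩ := hφ
    rw [integral_map hWRm.aemeasurable hK.continuous.aestronglyMeasurable]
    exact le_max_right _ _
  have hmeanL : ∫ x, x ∂(P.map WL) = ∫ ω, WL ω ∂P :=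
    integral_map hWLm.aemeasurable aestronglyMeasurable_id
  have hmeanR : ∫ x, x ∂(P.map WR) = ∫ ω, WR ω ∂P :=
    integral_map hWRm.aemeasurable aestronglyMeasurable_id
  have hsqL : ∫ x, x ^ 2 ∂(P.map WL) = variance WL P + (∫ ω, WL ω ∂P) ^ 2 := by
    rw [integral_map hWLm.aemeasurable (continuous_pow 2).aestronglyMeasurable]
    simpa using integral_sub_sq_eq P hmL 0
  have hsqR : ∫ x, x ^ 2 ∂(P.map WR) = variance WR P + (∫ ω, WR ω ∂P) ^ 2 := by
    rw [integral_map hWRm.aemeasurable (continuous_pow 2).aestronglyMeasurable]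
    simpa using integral_sub_sq_eq P hmR 0
  have hvarL : variance id (P.map WL) = variance WL P := by
    have h2 : MemLp id 2 (P.map WL) := by
      rw [memLp_map_measure_iff aestronglyMeasurable_id hWLm.aemeasurable]
      exact hmL
    rw [variance_eq_sub h2, variance_eq_sub hmL]
    simp only [Pi.pow_apply, id_eq]
    rw [integral_map hWLm.aemeasurable (continuous_pow 2).aestronglyMeasurable, hmeanL]
  have hvarR : variance id (P.map WR) = variance WR P := by
    have h2 : MemLp id 2 (P.map WR) := by
      rw [memLp_map_measure_iff aestronglyMeasurable_id hWRm.aemeasurable]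
      exact hmR
    rw [variance_eq_sub h2, variance_eq_sub hmR]
    simp only [Pi.pow_apply, id_eq]
    rw [integral_map hWRm.aemeasurable (continuous_pow 2).aestronglyMeasurable, hmeanR]
  have hfacts := fun (ν : Measure ℝ) (hν : ν ∈ 𝒫₀) =>
    bandit_nu_facts P WL WR (max (max ML MR) 0) hM hL hR hmL hmR ν
      (by rw [h𝒫₀] at hν; exact hν.1) (by rw [h𝒫₀] at hν; exact hν.2)
  haveI hne : Nonempty ↥𝒫₀ := ⟨⟨P.map WL, hLmem⟩⟩
  refine ⟨?_, ?_, ?_, ?_, ?_⟩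
  · -- sup of means
    have bdd : BddAbove (Set.range fun ν : 𝒫₀ => ∫ x, x ∂(ν : Measure ℝ)) := by
      refine ⟨max (∫ ω, WL ω ∂P) (∫ ω, WR ω ∂P), ?_⟩
      rintro y ⟨⟨ν, hν⟩, rfl⟩
      exact (hfacts ν hν).2.1.2
    apply le_antisymm
    · exact ciSup_le fun ν => (hfacts ν ν.2).2.1.2
    · rcases le_total (∫ ω, WL ω ∂P) (∫ ω, WR ω ∂P) with h | h
      · rw [max_eq_right h]
        exact le_ciSup_of_le bdd ⟨P.map WR, hRmem⟩ (le_of_eq hmeanR.symm)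
      · rw [max_eq_left h]
        exact le_ciSup_of_le bdd ⟨P.map WL, hLmem⟩ (le_of_eq hmeanL.symm)
  · -- inf of means
    have bdd : BddBelow (Set.range fun ν : 𝒫₀ => ∫ x, x ∂(ν : Measure ℝ)) := by
      refine ⟨min (∫ ω, WL ω ∂P) (∫ ω, WR ω ∂P), ?_⟩
      rintro y ⟨⟨ν, hν⟩, rfl⟩
      exact (hfacts ν hν).2.1.1
    apply le_antisymm
    · rcases le_total (∫ ω, WL ω ∂P) (∫ ω, WR ω ∂P) with h | h
      · rw [min_eq_left h]
        exact ciInf_le_of_le bdd ⟨P.map WL, hLmem⟩ (le_of_eq hmeanL)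
      · rw [min_eq_right h]
        exact ciInf_le_of_le bdd ⟨P.map WR, hRmem⟩ (le_of_eq hmeanR)
    · exact le_ciInf fun ν => (hfacts ν ν.2).2.1.1
  · -- inf of variances
    have bdd : BddBelow (Set.range fun ν : 𝒫₀ => variance id (ν : Measure ℝ)) := by
      refine ⟨min (variance WL P) (variance WR P), ?_⟩
      rintro y ⟨⟨ν, hν⟩, rfl⟩
      exact (hfacts ν hν).2.2.1
    apply le_antisymm
    · rcases le_total (variance WL P) (variance WR P) with h | h
      · rw [min_eq_left h]
        exact ciInf_le_of_le bdd ⟨P.map WL, hLmem⟩ (le_of_eq hvarL)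
      · rw [min_eq_right h]
        exact ciInf_le_of_le bdd ⟨P.map WR, hRmem⟩ (le_of_eq hvarR)
    · exact le_ciInf fun ν => (hfacts ν ν.2).2.2.1
  · -- sup of variances, equal means
    intro h
    have hub : ∀ ν : 𝒫₀, variance id (ν : Measure ℝ)
        ≤ max (variance WL P) (variance WR P) := by
      intro ν
      have h2 := (hfacts ν ν.2).2.2.2 (∫ ω, WL ω ∂P)
      rw [← h] at h2
      simpa using h2
    have bdd : BddAbove (Set.range fun ν : 𝒫₀ => variance id (ν : Measure ℝ)) := by
      refine ⟨max (variance WL P) (variance WR P), ?_⟩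
      rintro y ⟨ν, rfl⟩
      exact hub ν
    apply le_antisymm (ciSup_le hub)
    rcases le_total (variance WL P) (variance WR P) with hv | hv
    · rw [max_eq_right hv]
      exact le_ciSup_of_le bdd ⟨P.map WR, hRmem⟩ (le_of_eq hvarR.symm)
    · rw [max_eq_left hv]
      exact le_ciSup_of_le bdd ⟨P.map WL, hLmem⟩ (le_of_eq hvarL.symm)
  · -- sup of variances, unequal means
    intro hne' hcond
    have hΔ : (∫ ω, WL ω ∂P) - ∫ ω, WR ω ∂P ≠ 0 := sub_ne_zero.mpr hne'
    have hΔ2 : (0:ℝ) < ((∫ ω, WL ω ∂P) - ∫ ω, WR ω ∂P) ^ 2 := by positivity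
    obtain ⟨hab1, hab2⟩ := abs_le.1 hcond
    have hub : ∀ ν : 𝒫₀, variance id (ν : Measure ℝ)
        ≤ (1 / 4) * (((∫ ω, WL ω ∂P) - ∫ ω, WR ω ∂P) ^ 2
            + ((variance WL P - variance WR P) / ((∫ ω, WL ω ∂P) - ∫ ω, WR ω ∂P)) ^ 2)
          + (variance WL P + variance WR P) / 2 := by
      intro ν
      have h2 := (hfacts ν ν.2).2.2.2
        (((∫ ω, WL ω ∂P) + ∫ ω, WR ω ∂P) / 2
          + (variance WL P - variance WR P) / (2 * ((∫ ω, WL ω ∂P) - ∫ ω, WR ω ∂P)))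
      have e1 : variance WL P + ((∫ ω, WL ω ∂P)
          - (((∫ ω, WL ω ∂P) + ∫ ω, WR ω ∂P) / 2
          + (variance WL P - variance WR P) / (2 * ((∫ ω, WL ω ∂P) - ∫ ω, WR ω ∂P)))) ^ 2
          = (1 / 4) * (((∫ ω, WL ω ∂P) - ∫ ω, WR ω ∂P) ^ 2
            + ((variance WL P - variance WR P) / ((∫ ω, WL ω ∂P) - ∫ ω, WR ω ∂P)) ^ 2)
          + (variance WL P + variance WR P) / 2 := by
        field_simp
        try ring
      have e2 : variance WR P + ((∫ ω, WR ω ∂P)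
          - (((∫ ω, WL ω ∂P) + ∫ ω, WR ω ∂P) / 2
          + (variance WL P - variance WR P) / (2 * ((∫ ω, WL ω ∂P) - ∫ ω, WR ω ∂P)))) ^ 2
          = (1 / 4) * (((∫ ω, WL ω ∂P) - ∫ ω, WR ω ∂P) ^ 2
            + ((variance WL P - variance WR P) / ((∫ ω, WL ω ∂P) - ∫ ω, WR ω ∂P)) ^ 2)
          + (variance WL P + variance WR P) / 2 := by
        field_simp
        try ring
      rw [e1, e2, max_self] at h2
      exact h2
    have bdd : BddAbove (Set.range fun ν : 𝒫₀ => variance id (ν : Measure ℝ)) := by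
      refine ⟨(1 / 4) * (((∫ ω, WL ω ∂P) - ∫ ω, WR ω ∂P) ^ 2
            + ((variance WL P - variance WR P) / ((∫ ω, WL ω ∂P) - ∫ ω, WR ω ∂P)) ^ 2)
          + (variance WL P + variance WR P) / 2, ?_⟩
      rintro y ⟨ν, rfl⟩
      exact hub ν
    apply le_antisymm (ciSup_le hub)
    -- attainment by the optimal mixture
    set l : ℝ := 1/2 + (variance WL P - variance WR P)
        / (2 * ((∫ ω, WL ω ∂P) - ∫ ω, WR ω ∂P) ^ 2) with hl
    have hlkey : l = ((((∫ ω, WL ω ∂P) - ∫ ω, WR ω ∂P) ^ 2) + (variance WL P - variance WR P))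
        / (2 * ((∫ ω, WL ω ∂P) - ∫ ω, WR ω ∂P) ^ 2) := by
      rw [hl]; field_simp; try ring
    have hl0 : 0 ≤ l := by
      rw [hlkey]
      apply div_nonneg (by linarith) (by positivity)
    have hl1 : l ≤ 1 := by
      rw [hlkey, div_le_one (by positivity)]
      linarith
    haveI instMix := mix_prob (P.map WL) (P.map WR) l hl0 hl1
    have hmixmem : (ENNReal.ofReal l • P.map WL + ENNReal.ofReal (1 - l) • P.map WR) ∈ 𝒫₀ := by
      rw [h𝒫₀]
      refine ⟨instMix, fun φ hφ => ?_⟩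
      obtain ⟨K, hK⟩ := hφ
      have i1 : Integrable φ (P.map WL) := lip_integrable_map P hWLm hL hK
      have i2 : Integrable φ (P.map WR) := lip_integrable_map P hWRm hR hK
      rw [integral_mix _ _ l hl0 hl1 i1 i2,
        integral_map hWLm.aemeasurable hK.continuous.aestronglyMeasurable,
        integral_map hWRm.aemeasurable hK.continuous.aestronglyMeasurable]
      calc l * ∫ ω, φ (WL ω) ∂P + (1 - l) * ∫ ω, φ (WR ω) ∂P
          ≤ l * max (∫ ω, φ (WL ω) ∂P) (∫ ω, φ (WR ω) ∂P)
            + (1 - l) * max (∫ ω, φ (WL ω) ∂P) (∫ ω, φ (WR ω) ∂P) :=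
            add_le_add (mul_le_mul_of_nonneg_left (le_max_left _ _) hl0)
              (mul_le_mul_of_nonneg_left (le_max_right _ _) (by linarith))
        _ = max (∫ ω, φ (WL ω) ∂P) (∫ ω, φ (WR ω) ∂P) := by ring
    have imean1 : Integrable (fun x : ℝ => x) (P.map WL) :=
      lip_integrable_map P hWLm hL LipschitzWith.id
    have imean2 : Integrable (fun x : ℝ => x) (P.map WR) :=
      lip_integrable_map P hWRm hR LipschitzWith.id
    have isq1 : Integrable (fun x : ℝ => x ^ 2) (P.map WL) := by
      rw [integrable_map_measure (continuous_pow 2).aestronglyMeasurable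
        hWLm.aemeasurable]
      exact hmL.integrable_sq
    have isq2 : Integrable (fun x : ℝ => x ^ 2) (P.map WR) := by
      rw [integrable_map_measure (continuous_pow 2).aestronglyMeasurable
        hWRm.aemeasurable]
      exact hmR.integrable_sq
    have hmixmean : ∫ x, x ∂(ENNReal.ofReal l • P.map WL + ENNReal.ofReal (1 - l) • P.map WR)
        = l * ∫ ω, WL ω ∂P + (1 - l) * ∫ ω, WR ω ∂P := by
      rw [integral_mix _ _ l hl0 hl1 imean1 imean2, hmeanL, hmeanR]
    have hmixsq : ∫ x, x ^ 2 ∂(ENNReal.ofReal l • P.map WL + ENNReal.ofReal (1 - l) • P.map WR)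
        = l * (variance WL P + (∫ ω, WL ω ∂P) ^ 2)
          + (1 - l) * (variance WR P + (∫ ω, WR ω ∂P) ^ 2) := by
      rw [integral_mix _ _ l hl0 hl1 isq1 isq2, hsqL, hsqR]
    have hmem2mix : MemLp id 2
        (ENNReal.ofReal l • P.map WL + ENNReal.ofReal (1 - l) • P.map WR) :=
      (hfacts _ hmixmem).1
    have hmixvar : variance id
        (ENNReal.ofReal l • P.map WL + ENNReal.ofReal (1 - l) • P.map WR)
        = (1 / 4) * (((∫ ω, WL ω ∂P) - ∫ ω, WR ω ∂P) ^ 2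
            + ((variance WL P - variance WR P) / ((∫ ω, WL ω ∂P) - ∫ ω, WR ω ∂P)) ^ 2)
          + (variance WL P + variance WR P) / 2 := by
      rw [variance_eq_sub hmem2mix]
      simp only [Pi.pow_apply, id_eq]
      rw [hmixsq, hmixmean, hl]
      field_simp
      ring
    exact le_ciSup_of_le bdd ⟨_, hmixmem⟩ (le_of_eq hmixvar.symm)
end

section
/- Let W^L and W^R be bounded random variables on a probability space (Ω₀, 𝒜, P₀). On Ω = Ω₀^ℕ with the infinite product measure P = P₀^{⊗ℕ}, set Wᵢ^L(ω) = W^L(ωᵢ) and Wᵢ^R(ω) = W^R(ωᵢ) for i ≥ 1. A strategy s consists of s₁ ∈ {0,1} and Borel measurable maps σᵢ : ℝ^{i−1} → {0,1} for i ≥ 2; its rewards are defined recursively by Z₁^s = s₁W₁^L + (1−s₁)W₁^R and Zᵢ^s = sᵢWᵢ^L + (1−sᵢ)Wᵢ^R with sᵢ = σᵢ(Z₁^s,…,Z_{i−1}^s). Let 𝒫₀ be the set of Borel probability measures ν on ℝ with ∫ φ dν ≤ max(E[φ(W^L)], E[φ(W^R)]) for all Lipschitz φ : ℝ → ℝ,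 and let 𝒫 be the kernel-generated set over 𝒫₀ on (ℝ^ℕ, ℬ(ℝ^ℕ)). Then for every n ≥ 1 and every bounded Borel measurable f : ℝⁿ → ℝ, sup over all strategies s of E_P[f(Z₁^s,…,Zₙ^s)] equals sup_{Q∈𝒫} E_Q[f(X₁,…,Xₙ)], and this supremum over strategies is attained. -/
set_option linter.unusedSectionVars false
set_option maxHeartbeats 1000000

open MeasureTheory ProbabilityTheory Filter
open scoped ENNReal NNReal

/-- Rewards of a strategy in the two-armed bandit: at round `i` the strategy looks at the
previous rewards and chooses arm L (`true`) or arm R (`false`). -/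
noncomputable def banditReward {Ω₀ : Type*} (WL WR : Ω₀ → ℝ)
    (σ : (i : ℕ) → (Fin i → ℝ) → Bool) (ω : ℕ → Ω₀) : ℕ → ℝ
  | i =>
    if σ i (fun j : Fin i => banditReward WL WR σ ω j) then WL (ω i) else WR (ω i)
  decreasing_by all_goals exact j.2

section Aux

open Metric

lemma bdd_integrable {α : Type*} [MeasurableSpace α] (μ : Measure α) [IsFiniteMeasure μ]
    {f : α → ℝ} (hf : AEStronglyMeasurable f μ) (C : ℝ) (h : ∀ x, |f x| ≤ C) :
    Integrable f μ := by
  refine Integrable.mono' (integrable_const C) hf (ae_of_all _ fun x => ?_)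
  simpa [Real.norm_eq_abs] using h x

lemma abs_integral_le_of_bound {α : Type*} [MeasurableSpace α] {μ : Measure α}
    [IsProbabilityMeasure μ] (f : α → ℝ) {C : ℝ} (h : ∀ x, |f x| ≤ C) :
    |∫ x, f x ∂μ| ≤ C := by
  have h' : ∀ᵐ x ∂μ, ‖f x‖ ≤ C := ae_of_all _ fun x => by rw [Real.norm_eq_abs]; exact h x
  have := norm_integral_le_of_norm_le_const (μ := μ) h'
  rw [probReal_univ, mul_one, Real.norm_eq_abs] at this
  exact this

/-- Lipschitz functions are dense in L¹ of a finite Borel measure on ℝ. -/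
lemma lipschitz_approx (m : Measure ℝ) [IsFiniteMeasure m] :
    ∀ ⦃g : ℝ → ℝ⦄, Integrable g m → ∀ ε : ℝ, 0 < ε →
    ∃ (L : ℝ≥0) (φ : ℝ → ℝ), LipschitzWith L φ ∧ Integrable φ m ∧
      ∫ x, |g x - φ x| ∂m ≤ ε := by
  apply Integrable.induction
  · -- indicators
    intro c s hs _ ε hε
    have hc1 : (0:ℝ) < |c| + 1 := by positivity
    have hδpos : 0 < ε / (2 * (|c| + 1)) := by positivity
    set δ : ℝ := ε / (2 * (|c| + 1)) with hδ
    obtain ⟨F, hFs, hFc, hF⟩ := hs.exists_isClosed_diff_lt (measure_ne_top m s)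
      (ε := ENNReal.ofReal δ) (by simp only [ne_eq, ENNReal.ofReal_eq_zero, not_le]; exact hδpos)
    have hFm : MeasurableSet F := hFc.measurableSet
    have hdiff : (m (s \ F)).toReal ≤ δ := by
      have := (ENNReal.toReal_lt_toReal (measure_ne_top _ _) ENNReal.ofReal_ne_top).2 hF
      rw [ENNReal.toReal_ofReal hδpos.le] at this
      exact this.le
    have hδe : δ * (|c| + 1) ≤ ε / 2 := by
      rw [hδ, div_mul_eq_mul_div, mul_comm (2:ℝ), ← div_div,
        mul_div_cancel_right₀ _ (ne_of_gt hc1)]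
    rcases Set.eq_empty_or_nonempty F with hFe | hFne
    · -- F empty : take φ = 0
      refine ⟨0, fun _ => 0, LipschitzWith.const' 0, integrable_const 0, ?_⟩
      have hms : (m s).toReal ≤ δ := by simpa [hFe] using hdiff
      have heq : (fun x => |s.indicator (fun _ => c) x - 0|)
          = s.indicator (fun _ => |c|) := by
        funext x; by_cases hx : x ∈ s <;> simp [Set.indicator_apply, hx]
      rw [heq, integral_indicator_const _ hs, smul_eq_mul]
      calc (m s).toReal * |c| ≤ δ * (|c| + 1) :=
            mul_le_mul hms (by linarith [abs_nonneg c]) (abs_nonneg c) hδpos.le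
        _ ≤ ε / 2 := hδe
        _ ≤ ε := by linarith
    · -- F nonempty
      set d : ℝ → ℝ := fun x => infDist x F with hd
      have hd0 : ∀ x, 0 ≤ d x := fun x => infDist_nonneg
      have hdcont : Continuous d := (lipschitz_infDist_pt F).continuous
      set φ : ℕ → ℝ → ℝ := fun j x => c * max (1 - (j:ℝ) * d x) 0 with hφ
      have hφbd : ∀ (j : ℕ) x, |φ j x| ≤ |c| := by
        intro j x
        rw [hφ]; simp only [abs_mul]
        have h1 : |max (1 - (j:ℝ) * d x) 0| ≤ 1 := by
          rw [abs_le]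
          constructor
          · linarith [le_max_right (1 - (j:ℝ) * d x) 0]
          · exact max_le (by nlinarith [hd0 x, Nat.cast_nonneg (α := ℝ) j]) zero_le_one
        nlinarith [abs_nonneg c]
      have hφlip : ∀ j : ℕ, LipschitzWith (Real.toNNReal (|c| * (j:ℝ))) (φ j) := by
        intro j
        refine LipschitzWith.of_dist_le_mul fun x y => ?_
        rw [Real.coe_toNNReal _ (by positivity)]
        rw [Real.dist_eq, Real.dist_eq, hφ]
        simp only
        rw [← mul_sub, abs_mul]
        have h1 : |max (1 - (j:ℝ) * d x) 0 - max (1 - (j:ℝ) * d y) 0|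
            ≤ |(1 - (j:ℝ) * d x) - (1 - (j:ℝ) * d y)| := abs_max_sub_max_le_abs _ _ _
        have h2 : |(1 - (j:ℝ) * d x) - (1 - (j:ℝ) * d y)| = (j:ℝ) * |d x - d y| := by
          have h3 : (1 - (j:ℝ) * d x) - (1 - (j:ℝ) * d y) = (j:ℝ) * (d y - d x) := by ring
          rw [h3, abs_mul, Nat.abs_cast, abs_sub_comm]
        have h4 : |d x - d y| ≤ |x - y| := by
          have := (lipschitz_infDist_pt F).dist_le_mul x y
          rw [Real.dist_eq, Real.dist_eq] at this
          simpa using this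
        calc |c| * |max (1 - (j:ℝ) * d x) 0 - max (1 - (j:ℝ) * d y) 0|
            ≤ |c| * ((j:ℝ) * |d x - d y|) := by
              rw [← h2]; exact mul_le_mul_of_nonneg_left h1 (abs_nonneg c)
          _ ≤ |c| * ((j:ℝ) * |x - y|) := by
              refine mul_le_mul_of_nonneg_left ?_ (abs_nonneg c)
              exact mul_le_mul_of_nonneg_left h4 (Nat.cast_nonneg j)
          _ = |c| * (j:ℝ) * |x - y| := by ring
      have hφmeas : ∀ j : ℕ, Measurable (φ j) := fun j => ((hφlip j).continuous).measurable
      have hφint : ∀ j : ℕ, Integrable (φ j) m := fun j =>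
        bdd_integrable m ((hφmeas j).aestronglyMeasurable) (|c|) (hφbd j)
      -- dominated convergence
      have hlim : Tendsto (fun j => ∫ x, |s.indicator (fun _ => c) x - φ j x| ∂m) atTop
          (nhds (∫ x, (s \ F).indicator (fun _ => |c|) x ∂m)) := by
        refine tendsto_integral_of_dominated_convergence (fun _ => 2 * |c|)
          (fun j => (((measurable_const.indicator hs).sub (hφmeas j)).abs).aestronglyMeasurable)
          (integrable_const _) (fun j => ae_of_all _ fun x => ?_) (ae_of_all _ fun x => ?_)
        · have h1 : |s.indicator (fun _ => c) x| ≤ |c| := by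
            by_cases hx : x ∈ s <;> simp [Set.indicator_apply, hx, abs_nonneg]
          have := abs_sub (s.indicator (fun _ => c) x) (φ j x)
          rw [Real.norm_eq_abs, abs_abs]
          show |s.indicator (fun _ => c) x - φ j x| ≤ 2 * |c|
          linarith [hφbd j x, abs_sub (s.indicator (fun _ => c) x) (φ j x)]
        · by_cases hxF : x ∈ F
          · have hdx : d x = 0 := infDist_zero_of_mem hxF
            have hxs : x ∈ s := hFs hxF
            have hφx : ∀ j : ℕ, φ j x = c := by
              intro j; rw [hφ]; simp [hdx]
            have hval : (s \ F).indicator (fun _ => |c|) x = 0 := by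
              simp [Set.indicator_apply, hxF]
            rw [hval]
            have : (fun j : ℕ => |s.indicator (fun _ => c) x - φ j x|) = fun _ => 0 := by
              funext j; rw [hφx j]; simp [Set.indicator_apply, hxs]
            rw [this]; exact tendsto_const_nhds
          · have hdx : 0 < d x := (hFc.notMem_iff_infDist_pos hFne).1 hxF
            have hev : ∀ᶠ j : ℕ in atTop, φ j x = 0 := by
              filter_upwards [eventually_ge_atTop (Nat.ceil (1 / d x))] with j hj
              rw [hφ]; simp only
              have hj' : 1 / d x ≤ (j:ℝ) := le_trans (Nat.le_ceil _) (by exact_mod_cast hj)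
              have : 1 - (j:ℝ) * d x ≤ 0 := by
                rw [div_le_iff₀ hdx] at hj'; nlinarith
              rw [max_eq_right this]; ring
            have hval : (s \ F).indicator (fun _ => |c|) x
                = |s.indicator (fun _ => c) x - 0| := by
              by_cases hxs : x ∈ s <;> simp [Set.indicator_apply, hxs, hxF]
            rw [hval]
            refine Tendsto.congr' ?_ tendsto_const_nhds
            filter_upwards [hev] with j hj
            rw [hj]
          
      have hlimval : ∫ x, (s \ F).indicator (fun _ => |c|) x ∂m < ε := by
        rw [integral_indicator_const _ (hs.diff hFm), smul_eq_mul]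
        calc (m (s \ F)).toReal * |c| ≤ δ * (|c| + 1) :=
              mul_le_mul hdiff (by linarith [abs_nonneg c]) (abs_nonneg c) hδpos.le
          _ ≤ ε / 2 := hδe
          _ < ε := by linarith
      obtain ⟨j, hj⟩ := (hlim.eventually_lt_const hlimval).exists
      exact ⟨_, φ j, hφlip j, hφint j, hj.le⟩
  · -- additivity
    intro f g _ hf hg Pf Pg ε hε
    obtain ⟨L₁, φ₁, hlip₁, hint₁, h₁⟩ := Pf (ε / 2) (by positivity)
    obtain ⟨L₂, φ₂, hlip₂, hint₂, h₂⟩ := Pg (ε / 2) (by positivity)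
    refine ⟨L₁ + L₂, φ₁ + φ₂, hlip₁.add hlip₂, hint₁.add hint₂, ?_⟩
    have h1 : Integrable (fun x => |f x - φ₁ x|) m := (hf.sub hint₁).abs
    have h2 : Integrable (fun x => |g x - φ₂ x|) m := (hg.sub hint₂).abs
    have h0 : Integrable (fun x => |(f + g) x - (φ₁ + φ₂) x|) m :=
      ((hf.add hg).sub (hint₁.add hint₂)).abs
    have hmono : ∫ x, |(f + g) x - (φ₁ + φ₂) x| ∂m
        ≤ ∫ x, (|f x - φ₁ x| + |g x - φ₂ x|) ∂m := by
      refine integral_mono h0 (h1.add h2) fun x => ?_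
      have : (f + g) x - (φ₁ + φ₂) x = (f x - φ₁ x) + (g x - φ₂ x) := by
        simp [Pi.add_apply]; ring
      rw [this]; exact abs_add_le _ _
    rw [integral_add h1 h2] at hmono
    linarith
  · -- closedness in L¹
    refine IsSeqClosed.isClosed fun fs Flim hmem htend ε hε => ?_
    obtain ⟨N, hN⟩ := Metric.tendsto_atTop.1 htend (ε / 2) (by positivity)
    obtain ⟨L, φ, hlip, hint, happ⟩ := hmem N (ε / 2) (by positivity)
    refine ⟨L, φ, hlip, hint, ?_⟩
    have hFi : Integrable (⇑Flim) m := L1.integrable_coeFn Flim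
    have hfsi : Integrable (⇑(fs N)) m := L1.integrable_coeFn (fs N)
    have hdist : ∫ x, |Flim x - (fs N : ℝ → ℝ) x| ∂m < ε / 2 := by
      have hd := L1.dist_eq_integral_dist Flim (fs N)
      simp only [Real.dist_eq] at hd
      rw [← hd, dist_comm]
      exact hN N le_rfl
    have h1 : Integrable (fun x => |Flim x - (fs N : ℝ → ℝ) x|) m := (hFi.sub hfsi).abs
    have h2 : Integrable (fun x => |(fs N : ℝ → ℝ) x - φ x|) m := (hfsi.sub hint).abs
    have h0 : Integrable (fun x => |Flim x - φ x|) m := (hFi.sub hint).abs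
    have hmono : ∫ x, |Flim x - φ x| ∂m
        ≤ ∫ x, (|Flim x - (fs N : ℝ → ℝ) x| + |(fs N : ℝ → ℝ) x - φ x|) ∂m := by
      refine integral_mono h0 (h1.add h2) fun x => ?_
      have : Flim x - φ x = (Flim x - (fs N : ℝ → ℝ) x) + ((fs N : ℝ → ℝ) x - φ x) := by ring
      rw [this]; exact abs_add_le _ _
    rw [integral_add h1 h2] at hmono
    linarith
  · -- a.e. congruence
    intro f g hfg hf Pf ε hε
    obtain ⟨L, φ, hlip, hint, happ⟩ := Pf ε hε
    refine ⟨L, φ, hlip, hint, ?_⟩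
    have : (fun x => |g x - φ x|) =ᵐ[m] fun x => |f x - φ x| := by
      filter_upwards [hfg] with x hx; rw [hx]
    rw [integral_congr_ae this]
    exact happ


lemma dominated_of_lip {Ω₀ : Type*} [MeasurableSpace Ω₀] (P₀ : Measure Ω₀)
    [IsProbabilityMeasure P₀] {WL WR : Ω₀ → ℝ} (hWLm : Measurable WL) (hWRm : Measurable WR)
    {ν : Measure ℝ} (hνp : IsProbabilityMeasure ν)
    (hν : ∀ φ : ℝ → ℝ, (∃ L : ℝ≥0, LipschitzWith L φ) →
        ∫ x, φ x ∂ν ≤ max (∫ ω, φ (WL ω) ∂P₀) (∫ ω, φ (WR ω) ∂P₀))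
    {g : ℝ → ℝ} (hgm : Measurable g) {C : ℝ} (hgb : ∀ x, |g x| ≤ C) :
    ∫ x, g x ∂ν ≤ max (∫ ω, g (WL ω) ∂P₀) (∫ ω, g (WR ω) ∂P₀) := by
  set μL : Measure ℝ := P₀.map WL with hμL
  set μR : Measure ℝ := P₀.map WR with hμR
  have hpL : IsProbabilityMeasure μL := Measure.isProbabilityMeasure_map hWLm.aemeasurable
  have hpR : IsProbabilityMeasure μR := Measure.isProbabilityMeasure_map hWRm.aemeasurable
  set m : Measure ℝ := ν + μL + μR with hm
  have hfm : IsFiniteMeasure m := by infer_instance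
  have hleν : ν ≤ m := le_trans (Measure.le_add_right le_rfl) (Measure.le_add_right le_rfl)
  have hleL : μL ≤ m := le_trans (Measure.le_add_left le_rfl) (Measure.le_add_right le_rfl)
  have hleR : μR ≤ m := Measure.le_add_left le_rfl
  have hgint_m : Integrable g m := bdd_integrable m hgm.aestronglyMeasurable C hgb
  have hgmapL : ∫ x, g x ∂μL = ∫ ω, g (WL ω) ∂P₀ :=
    integral_map hWLm.aemeasurable hgm.aestronglyMeasurable
  have hgmapR : ∫ x, g x ∂μR = ∫ ω, g (WR ω) ∂P₀ :=
    integral_map hWRm.aemeasurable hgm.aestronglyMeasurable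
  refine le_of_forall_pos_le_add fun ε hε => ?_
  obtain ⟨L, φ, hlip, hφint, happ⟩ := lipschitz_approx m hgint_m (ε / 3) (by positivity)
  have hφsm : AEStronglyMeasurable φ m := hlip.continuous.aestronglyMeasurable
  have habs_int : Integrable (fun x => |g x - φ x|) m := (hgint_m.sub hφint).abs
  have herr : ∀ μ' : Measure ℝ, μ' ≤ m → ∫ x, |g x - φ x| ∂μ' ≤ ε / 3 := fun μ' hle =>
    le_trans (integral_mono_measure hle (ae_of_all _ fun x => abs_nonneg _) habs_int) happ
  have hgνint : Integrable g ν := hgint_m.mono_measure hleν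
  have hgLint : Integrable g μL := hgint_m.mono_measure hleL
  have hgRint : Integrable g μR := hgint_m.mono_measure hleR
  have hφνint : Integrable φ ν := hφint.mono_measure hleν
  have hφLint : Integrable φ μL := hφint.mono_measure hleL
  have hφRint : Integrable φ μR := hφint.mono_measure hleR
  have key : ∀ (μ' : Measure ℝ), Integrable g μ' → Integrable φ μ' → μ' ≤ m →
      |∫ x, g x ∂μ' - ∫ x, φ x ∂μ'| ≤ ε / 3 := by
    intro μ' hgi hφi hle
    rw [← integral_sub hgi hφi]
    refine le_trans ?_ (herr μ' hle)
    have := norm_integral_le_integral_norm (μ := μ') (f := fun x => g x - φ x)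
    simpa [Real.norm_eq_abs] using this
  have h1 := key ν hgνint hφνint hleν
  have h2 := key μL hgLint hφLint hleL
  have h3 := key μR hgRint hφRint hleR
  have hφν := hν φ ⟨L, hlip⟩
  have hφmapL : ∫ ω, φ (WL ω) ∂P₀ = ∫ x, φ x ∂μL :=
    (integral_map hWLm.aemeasurable hlip.continuous.aestronglyMeasurable).symm
  have hφmapR : ∫ ω, φ (WR ω) ∂P₀ = ∫ x, φ x ∂μR :=
    (integral_map hWRm.aemeasurable hlip.continuous.aestronglyMeasurable).symm
  have l1 : ∫ x, φ x ∂μL ≤ ∫ x, g x ∂μL + ε / 3 := by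
    have := abs_le.1 h2; linarith [this.1, this.2]
  have l2 : ∫ x, φ x ∂μR ≤ ∫ x, g x ∂μR + ε / 3 := by
    have := abs_le.1 h3; linarith [this.1, this.2]
  have hmaxle : max (∫ x, φ x ∂μL) (∫ x, φ x ∂μR)
      ≤ max (∫ x, g x ∂μL) (∫ x, g x ∂μR) + ε / 3 :=
    max_le (le_trans l1 (add_le_add_left (le_max_left _ _) _))
      (le_trans l2 (add_le_add_left (le_max_right _ _) _))
  have hstart : ∫ x, g x ∂ν ≤ ∫ x, φ x ∂ν + ε / 3 := by
    have := abs_le.1 h1; linarith [this.1, this.2]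
  rw [hφmapL, hφmapR] at hφν
  rw [← hgmapL, ← hgmapR]
  linarith


lemma measurable_snoc' {γ : Type*} [MeasurableSpace γ] (k : ℕ) :
    Measurable (fun p : (Fin k → γ) × γ => (Fin.snoc p.1 p.2 : Fin (k + 1) → γ)) := by
  apply measurable_pi_lambda
  intro i
  refine Fin.lastCases ?_ ?_ i
  · simp only [Fin.snoc_last]; exact measurable_snd
  · intro j; simp only [Fin.snoc_castSucc]
    exact (measurable_pi_apply j).comp measurable_fst

variable {Ω₀ : Type*} [MeasurableSpace Ω₀]

lemma pi_snoc (Q : Measure Ω₀) [IsProbabilityMeasure Q] (k : ℕ) :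
    ((Measure.pi fun _ : Fin k => Q).prod Q).map
      (fun p : (Fin k → Ω₀) × Ω₀ => Fin.snoc p.1 p.2)
    = Measure.pi (fun _ : Fin (k + 1) => Q) := by
  have h := (measurePreserving_piFinSuccAbove (fun _ : Fin (k + 1) => Q) (Fin.last k)).symm
  have hswap : ((Measure.pi fun _ : Fin k => Q).prod Q).map Prod.swap
      = Q.prod (Measure.pi fun _ : Fin k => Q) := Measure.prod_swap
  have hcomp : (MeasurableEquiv.piFinSuccAbove (fun _ : Fin (k + 1) => Ω₀) (Fin.last k)).symm
      ∘ (Prod.swap : (Fin k → Ω₀) × Ω₀ → Ω₀ × (Fin k → Ω₀))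
      = fun p : (Fin k → Ω₀) × Ω₀ => Fin.snoc p.1 p.2 := by
    funext p
    obtain ⟨a, b⟩ := p
    show (Fin.insertNthEquiv (fun _ => Ω₀) (Fin.last k)) (b, a) = Fin.snoc a b
    rw [Fin.insertNthEquiv_last]
    rfl
  rw [← h.map_eq, ← hswap, Measure.map_map (MeasurableEquiv.measurable _) measurable_swap, hcomp]

open Classical in
/-- The 2-valued kernel choosing `Q.map WL` or `Q.map WR` according to a Boolean function. -/
noncomputable def kernelLR {β : Type*} [MeasurableSpace β] (Q : Measure Ω₀) (WL WR : Ω₀ → ℝ)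
    (c : β → Bool) (hc : Measurable c) : Kernel β ℝ :=
  Kernel.piecewise (show MeasurableSet {x | c x = true} from hc (measurableSet_singleton true))
    (Kernel.const _ (Q.map WL)) (Kernel.const _ (Q.map WR))

lemma kernelLR_apply {β : Type*} [MeasurableSpace β] (Q : Measure Ω₀) (WL WR : Ω₀ → ℝ)
    (c : β → Bool) (hc : Measurable c) (x : β) :
    kernelLR Q WL WR c hc x = if c x then Q.map WL else Q.map WR := by
  by_cases h : c x = true <;> simp [kernelLR, Kernel.piecewise_apply, h]

lemma kernelLR_markov {β : Type*} [MeasurableSpace β] (Q : Measure Ω₀)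
    [IsProbabilityMeasure Q] (WL WR : Ω₀ → ℝ) (hWLm : Measurable WL) (hWRm : Measurable WR)
    (c : β → Bool) (hc : Measurable c) : IsMarkovKernel (kernelLR Q WL WR c hc) := by
  have h1 : IsProbabilityMeasure (Q.map WL) := Measure.isProbabilityMeasure_map hWLm.aemeasurable
  have h2 : IsProbabilityMeasure (Q.map WR) := Measure.isProbabilityMeasure_map hWRm.aemeasurable
  rw [kernelLR]
  infer_instance

lemma map_pair_eq_compProd {α β : Type*} [MeasurableSpace α] [MeasurableSpace β]
    (μ : Measure α) [IsProbabilityMeasure μ] (Q : Measure Ω₀) [IsProbabilityMeasure Q]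
    {WL WR : Ω₀ → ℝ} (hWLm : Measurable WL) (hWRm : Measurable WR)
    {ρ : α → β} (hρ : Measurable ρ) {c : β → Bool} (hc : Measurable c) :
    (μ.prod Q).map (fun p : α × Ω₀ => (ρ p.1, if c (ρ p.1) then WL p.2 else WR p.2))
    = (μ.map ρ).compProd (kernelLR Q WL WR c hc) := by
  have hmapρ : IsProbabilityMeasure (μ.map ρ) := Measure.isProbabilityMeasure_map hρ.aemeasurable
  have hmark := kernelLR_markov Q WL WR hWLm hWRm c hc
  have hG : Measurable (fun p : α × Ω₀ => (ρ p.1, if c (ρ p.1) then WL p.2 else WR p.2)) := by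
    refine Measurable.prodMk (hρ.comp measurable_fst) ?_
    have hcond : MeasurableSet {p : α × Ω₀ | c (ρ p.1) = true} :=
      ((hc.comp hρ).comp measurable_fst) (measurableSet_singleton true)
    exact Measurable.ite hcond (hWLm.comp measurable_snd) (hWRm.comp measurable_snd)
  ext s hs
  rw [Measure.map_apply hG hs, Measure.compProd_apply hs,
    lintegral_map (Kernel.measurable_kernel_prodMk_left hs) hρ,
    Measure.prod_apply (hG hs)]
  congr 1
  funext x
  have hsec : Prod.mk x ⁻¹' ((fun p : α × Ω₀ => (ρ p.1, if c (ρ p.1) then WL p.2 else WR p.2))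
      ⁻¹' s) = (fun ω => if c (ρ x) then WL ω else WR ω) ⁻¹' (Prod.mk (ρ x) ⁻¹' s) := by
    rfl
  rw [hsec, kernelLR_apply]
  have hT : MeasurableSet (Prod.mk (ρ x) ⁻¹' s) := measurable_prodMk_left hs
  by_cases h : c (ρ x) = true
  · have heq : (fun ω => if c (ρ x) = true then WL ω else WR ω) = WL := by
      funext ω; rw [if_pos h]
    rw [heq, if_pos h, Measure.map_apply hWLm hT]
  · have heq : (fun ω => if c (ρ x) = true then WL ω else WR ω) = WR := by
      funext ω; rw [if_neg h]
    rw [heq, if_neg h, Measure.map_apply hWRm hT]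


end Aux

section BR

variable {Ω₀ : Type*} [MeasurableSpace Ω₀] (WL WR : Ω₀ → ℝ)
  (σ σ' : (i : ℕ) → (Fin i → ℝ) → Bool)

lemma br_def (ω : ℕ → Ω₀) (i : ℕ) : banditReward WL WR σ ω i =
    if σ i (fun j : Fin i => banditReward WL WR σ ω j) then WL (ω i) else WR (ω i) := by
  rw [banditReward]

lemma br_congr_omega {ω ω' : ℕ → Ω₀} (i : ℕ) (h : ∀ j ≤ i, ω j = ω' j) :
    banditReward WL WR σ ω i = banditReward WL WR σ ω' i := by
  induction i using Nat.strong_induction_on with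
  | _ i ih =>
    rw [br_def, br_def]
    have h1 : (fun j : Fin i => banditReward WL WR σ ω j)
        = fun j : Fin i => banditReward WL WR σ ω' j := by
      funext j; exact ih j j.2 (fun l hl => h l (le_trans hl (le_of_lt j.2)))
    rw [h1, h i le_rfl]

lemma br_congr_sigma {ω : ℕ → Ω₀} (i : ℕ) (h : ∀ j ≤ i, σ j = σ' j) :
    banditReward WL WR σ ω i = banditReward WL WR σ' ω i := by
  induction i using Nat.strong_induction_on with
  | _ i ih =>
    rw [br_def, br_def]
    have h1 : (fun j : Fin i => banditReward WL WR σ ω j)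
        = fun j : Fin i => banditReward WL WR σ' ω j := by
      funext j; exact ih j j.2 (fun l hl => h l (le_trans hl (le_of_lt j.2)))
    rw [h1, h i le_rfl]

lemma br_measurable (hWL : Measurable WL) (hWR : Measurable WR)
    (hσ : ∀ i, Measurable (σ i)) (i : ℕ) :
    Measurable (fun ω => banditReward WL WR σ ω i) := by
  induction i using Nat.strong_induction_on with
  | _ i ih =>
    have hprev : Measurable (fun ω (j : Fin i) => banditReward WL WR σ ω j) :=
      measurable_pi_lambda _ fun j => ih j j.2
    have hcond : MeasurableSet {ω : ℕ → Ω₀ |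
        σ i (fun j : Fin i => banditReward WL WR σ ω j) = true} :=
      (hσ i).comp hprev (measurableSet_singleton true)
    have : (fun ω => banditReward WL WR σ ω i) = fun ω =>
        if σ i (fun j : Fin i => banditReward WL WR σ ω j) = true then WL (ω i)
        else WR (ω i) := by
      funext ω; rw [br_def]
    rw [this]
    exact Measurable.ite hcond (hWL.comp (measurable_pi_apply i))
      (hWR.comp (measurable_pi_apply i))

lemma br_bound {ω : ℕ → Ω₀} {ML MR : ℝ} (hL : ∀ x, |WL x| ≤ ML) (hR : ∀ x, |WR x| ≤ MR)
    (i : ℕ) : |banditReward WL WR σ ω i| ≤ max ML MR := by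
  rw [br_def]
  split
  · exact le_trans (hL _) (le_max_left _ _)
  · exact le_trans (hR _) (le_max_right _ _)

end BR

section Value

variable {Ω₀ : Type*} [MeasurableSpace Ω₀] (P₀ : Measure Ω₀) [IsProbabilityMeasure P₀]
  (WL WR : Ω₀ → ℝ) (hWLm : Measurable WL) (hWRm : Measurable WR)

noncomputable def stepFn (k : ℕ) (g : (Fin (k + 1) → ℝ) → ℝ) : (Fin k → ℝ) → ℝ :=
  fun x => max (∫ ω, g (Fin.snoc x (WL ω)) ∂P₀) (∫ ω, g (Fin.snoc x (WR ω)) ∂P₀)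

noncomputable def valueFn : (k : ℕ) → ((Fin k → ℝ) → ℝ) → ℝ
  | 0, g => g (fun i => i.elim0)
  | k + 1, g => valueFn k (stepFn P₀ WL WR k g)

include hWLm hWRm in
lemma stepFn_measurable {k : ℕ} {g : (Fin (k + 1) → ℝ) → ℝ} (hg : Measurable g) :
    Measurable (stepFn P₀ WL WR k g) := by
  have h1 : Measurable fun x : Fin k → ℝ => ∫ ω, g (Fin.snoc x (WL ω)) ∂P₀ := by
    have hj : StronglyMeasurable (fun q : (Fin k → ℝ) × Ω₀ => g (Fin.snoc q.1 (WL q.2))) :=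
      (hg.comp ((measurable_snoc' k).comp
        (measurable_fst.prodMk (hWLm.comp measurable_snd)))).stronglyMeasurable
    exact hj.integral_prod_right'.measurable
  have h2 : Measurable fun x : Fin k → ℝ => ∫ ω, g (Fin.snoc x (WR ω)) ∂P₀ := by
    have hj : StronglyMeasurable (fun q : (Fin k → ℝ) × Ω₀ => g (Fin.snoc q.1 (WR q.2))) :=
      (hg.comp ((measurable_snoc' k).comp
        (measurable_fst.prodMk (hWRm.comp measurable_snd)))).stronglyMeasurable
    exact hj.integral_prod_right'.measurable
  exact h1.max h2

lemma stepFn_bound {k : ℕ} {g : (Fin (k + 1) → ℝ) → ℝ} {C : ℝ} (hg : ∀ y, |g y| ≤ C) (x) :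
    |stepFn P₀ WL WR k g x| ≤ C := by
  rw [stepFn, abs_le]
  have h1 := abs_le.1 (abs_integral_le_of_bound (μ := P₀) _ (fun ω => hg (Fin.snoc x (WL ω))))
  have h2 := abs_le.1 (abs_integral_le_of_bound (μ := P₀) _ (fun ω => hg (Fin.snoc x (WR ω))))
  constructor
  · exact le_trans h1.1 (le_max_left _ _)
  · exact max_le h1.2 h2.2

lemma admissible_prob (𝒫seq : ℕ → Set (Measure ℝ)) :
    ∀ k, ∀ μ ∈ admissibleLaws 𝒫seq k, IsProbabilityMeasure μ := by
  intro k
  induction k with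
  | zero =>
    intro μ hμ
    rw [admissibleLaws] at hμ
    rw [Set.mem_singleton_iff.1 hμ]
    infer_instance
  | succ k ih =>
    rintro μ ⟨μ₀, hμ₀, κ, hκm, hκ, rfl⟩
    have := ih μ₀ hμ₀
    exact Measure.isProbabilityMeasure_map (measurable_snoc' k).aemeasurable

include hWLm hWRm in
lemma admissible_le_value (𝒫₀ : Set (Measure ℝ))
    (h𝒫₀ : 𝒫₀ = { ν : Measure ℝ | IsProbabilityMeasure ν ∧
      ∀ φ : ℝ → ℝ, (∃ L : ℝ≥0, LipschitzWith L φ) →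
        ∫ x, φ x ∂ν ≤ max (∫ ω, φ (WL ω) ∂P₀) (∫ ω, φ (WR ω) ∂P₀) }) :
    ∀ k, ∀ μ ∈ admissibleLaws (fun _ => 𝒫₀) k, ∀ g : (Fin k → ℝ) → ℝ, Measurable g →
      ∀ C : ℝ, (∀ x, |g x| ≤ C) → ∫ x, g x ∂μ ≤ valueFn P₀ WL WR k g := by
  intro k
  induction k with
  | zero =>
    intro μ hμ g hg C hgb
    rw [admissibleLaws] at hμ
    rw [Set.mem_singleton_iff.1 hμ, integral_dirac' _ _ hg.stronglyMeasurable]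
    rfl
  | succ k ih =>
    rintro μ ⟨μ₀, hμ₀, κ, hκm, hκ, rfl⟩ g hg C hgb
    have hμ₀p : IsProbabilityMeasure μ₀ := admissible_prob _ k μ₀ hμ₀
    have hgsnoc : Measurable fun p : (Fin k → ℝ) × ℝ => g (Fin.snoc p.1 p.2) :=
      hg.comp (measurable_snoc' k)
    have hint : Integrable (fun p : (Fin k → ℝ) × ℝ => g (Fin.snoc p.1 p.2)) (μ₀.compProd κ) :=
      bdd_integrable _ hgsnoc.aestronglyMeasurable C (fun p => hgb _)
    rw [integral_map (measurable_snoc' k).aemeasurable hg.aestronglyMeasurable,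
      Measure.integral_compProd hint]
    have hinner_meas : StronglyMeasurable fun x : Fin k → ℝ => ∫ y, g (Fin.snoc x y) ∂κ x :=
      hgsnoc.stronglyMeasurable.integral_kernel_prod_right'
    have hinner_le : ∀ x, ∫ y, g (Fin.snoc x y) ∂κ x ≤ stepFn P₀ WL WR k g x := by
      intro x
      have hx := hκ x
      rw [h𝒫₀] at hx
      exact dominated_of_lip P₀ hWLm hWRm hx.1 hx.2
        (hg.comp ((measurable_snoc' k).comp (measurable_const.prodMk measurable_id)))
        (fun y => hgb _)
    have hinner_bd : ∀ x, |∫ y, g (Fin.snoc x y) ∂κ x| ≤ C := by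
      intro x
      exact abs_integral_le_of_bound (μ := κ x) _ (fun y => hgb _)
    calc ∫ x, ∫ y, g (Fin.snoc x y) ∂κ x ∂μ₀
        ≤ ∫ x, stepFn P₀ WL WR k g x ∂μ₀ := by
          refine integral_mono
            (bdd_integrable _ hinner_meas.aestronglyMeasurable C hinner_bd)
            (bdd_integrable _ (stepFn_measurable P₀ WL WR hWLm hWRm hg).aestronglyMeasurable C
              (stepFn_bound P₀ WL WR hgb)) hinner_le
      _ ≤ valueFn P₀ WL WR k (stepFn P₀ WL WR k g) :=
          ih μ₀ hμ₀ _ (stepFn_measurable P₀ WL WR hWLm hWRm hg) C (stepFn_bound P₀ WL WR hgb)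
      _ = valueFn P₀ WL WR (k + 1) g := rfl



end Value

section Strategy

variable {Ω₀ : Type*} [MeasurableSpace Ω₀] (P₀ : Measure Ω₀) [IsProbabilityMeasure P₀]
  (WL WR : Ω₀ → ℝ) (hWLm : Measurable WL) (hWRm : Measurable WR)

noncomputable def extendFin [Nonempty Ω₀] (k : ℕ) (w : Fin k → Ω₀) : ℕ → Ω₀ :=
  fun j => if h : j < k then w ⟨j, h⟩ else Classical.arbitrary Ω₀

lemma extendFin_measurable [Nonempty Ω₀] (k : ℕ) :
    Measurable (extendFin (Ω₀ := Ω₀) k) := by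
  apply measurable_pi_lambda
  intro j
  by_cases h : j < k
  · simp only [extendFin, dif_pos h]; exact measurable_pi_apply _
  · simp only [extendFin, dif_neg h]; exact measurable_const

noncomputable def finR [Nonempty Ω₀] (σ : (i : ℕ) → (Fin i → ℝ) → Bool) (k : ℕ)
    (w : Fin k → Ω₀) : Fin k → ℝ :=
  fun i => banditReward WL WR σ (extendFin k w) i

include hWLm hWRm in
lemma finR_measurable [Nonempty Ω₀] (σ : (i : ℕ) → (Fin i → ℝ) → Bool)
    (hσ : ∀ i, Measurable (σ i)) (k : ℕ) : Measurable (finR WL WR σ k) := by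
  apply measurable_pi_lambda
  intro i
  exact (br_measurable WL WR σ hWLm hWRm hσ i).comp (extendFin_measurable k)

lemma Zk_eq [Nonempty Ω₀] (σ : (i : ℕ) → (Fin i → ℝ) → Bool) (k : ℕ) :
    (fun (ω : ℕ → Ω₀) (i : Fin k) => banditReward WL WR σ ω i)
    = (finR WL WR σ k) ∘ (fun ω (i : Fin k) => ω (i : ℕ)) := by
  funext ω
  funext i
  show banditReward WL WR σ ω i = banditReward WL WR σ (extendFin k fun j : Fin k => ω j) i
  apply br_congr_omega
  intro l hl
  have hlk : l < k := lt_of_le_of_lt hl i.2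
  simp only [extendFin, dif_pos hlk]

lemma finR_snoc [Nonempty Ω₀] (σ : (i : ℕ) → (Fin i → ℝ) → Bool) (k : ℕ)
    (w : Fin k → Ω₀) (ω : Ω₀) :
    finR WL WR σ (k + 1) (Fin.snoc w ω)
    = Fin.snoc (finR WL WR σ k w)
        (if σ k (finR WL WR σ k w) then WL ω else WR ω) := by
  have hagree : ∀ j : ℕ, j < k →
      extendFin (k + 1) (Fin.snoc w ω : Fin (k+1) → Ω₀) j = extendFin k w j := by
    intro j hj
    simp only [extendFin, dif_pos (Nat.lt_succ_of_lt hj), dif_pos hj]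
    show (Fin.snoc w ω : Fin (k+1) → Ω₀) ⟨j, Nat.lt_succ_of_lt hj⟩ = w ⟨j, hj⟩
    have : (⟨j, Nat.lt_succ_of_lt hj⟩ : Fin (k + 1)) = Fin.castSucc ⟨j, hj⟩ := rfl
    rw [this, Fin.snoc_castSucc]
  have hinner : ∀ j : Fin k,
      banditReward WL WR σ (extendFin (k + 1) (Fin.snoc w ω : Fin (k+1) → Ω₀)) j
      = finR WL WR σ k w j := by
    intro j
    apply br_congr_omega
    intro l hl
    exact hagree l (lt_of_le_of_lt hl j.2)
  funext i
  refine Fin.lastCases ?_ ?_ i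
  · rw [Fin.snoc_last]
    show banditReward WL WR σ (extendFin (k + 1) (Fin.snoc w ω : Fin (k+1) → Ω₀)) k = _
    rw [br_def]
    have h1 : (fun j : Fin k =>
        banditReward WL WR σ (extendFin (k + 1) (Fin.snoc w ω : Fin (k+1) → Ω₀)) j)
        = finR WL WR σ k w := funext hinner
    rw [h1]
    have h2 : extendFin (k + 1) (Fin.snoc w ω : Fin (k+1) → Ω₀) k = ω := by
      simp only [extendFin, dif_pos (Nat.lt_succ_self k)]
      show (Fin.snoc w ω : Fin (k+1) → Ω₀) (Fin.last k) = ω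
      rw [Fin.snoc_last]
    rw [h2]
  · intro j
    rw [Fin.snoc_castSucc]
    show banditReward WL WR σ (extendFin (k + 1) (Fin.snoc w ω : Fin (k+1) → Ω₀)) j
        = finR WL WR σ k w j
    exact hinner j

include hWLm hWRm in
lemma law_succ [Nonempty Ω₀]
    (P : Measure (ℕ → Ω₀)) [IsProbabilityMeasure P]
    (hmarg : ∀ m : ℕ, P.map (fun ω (i : Fin m) => ω i) = Measure.pi (fun _ : Fin m => P₀))
    (σ : (i : ℕ) → (Fin i → ℝ) → Bool) (hσ : ∀ i, Measurable (σ i)) (k : ℕ) :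
    P.map (fun ω (i : Fin (k + 1)) => banditReward WL WR σ ω i)
    = ((P.map (fun ω (i : Fin k) => banditReward WL WR σ ω i)).compProd
        (kernelLR P₀ WL WR (σ k) (hσ k))).map (fun p => Fin.snoc p.1 p.2) := by
  have hrestr : ∀ m : ℕ, Measurable fun (ω : ℕ → Ω₀) (i : Fin m) => ω (i : ℕ) :=
    fun m => measurable_pi_lambda _ fun i => measurable_pi_apply _
  have hF : ∀ m, Measurable (finR WL WR σ m) := finR_measurable WL WR hWLm hWRm σ hσ
  have hpair : Measurable (fun p : (Fin k → Ω₀) × Ω₀ =>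
      (finR WL WR σ k p.1, if σ k (finR WL WR σ k p.1) then WL p.2 else WR p.2)) := by
    refine Measurable.prodMk ((hF k).comp measurable_fst) ?_
    have hcond : MeasurableSet {p : (Fin k → Ω₀) × Ω₀ | σ k (finR WL WR σ k p.1) = true} :=
      ((hσ k).comp ((hF k).comp measurable_fst)) (measurableSet_singleton true)
    exact Measurable.ite hcond (hWLm.comp measurable_snd) (hWRm.comp measurable_snd)
  calc P.map (fun ω (i : Fin (k + 1)) => banditReward WL WR σ ω i)
      = (P.map (fun ω (i : Fin (k+1)) => ω (i : ℕ))).map (finR WL WR σ (k+1)) := by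
        rw [Measure.map_map (hF (k+1)) (hrestr (k+1)), ← Zk_eq]
    _ = ((Measure.pi (fun _ : Fin k => P₀)).prod P₀).map
          ((finR WL WR σ (k+1)) ∘ (fun p : (Fin k → Ω₀) × Ω₀ => Fin.snoc p.1 p.2)) := by
        rw [hmarg (k+1), ← pi_snoc P₀ k,
          Measure.map_map (hF (k+1)) (measurable_snoc' k)]
    _ = ((Measure.pi (fun _ : Fin k => P₀)).prod P₀).map
          ((fun p : (Fin k → ℝ) × ℝ => Fin.snoc p.1 p.2) ∘ (fun p : (Fin k → Ω₀) × Ω₀ =>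
            (finR WL WR σ k p.1, if σ k (finR WL WR σ k p.1) then WL p.2 else WR p.2))) := by
        congr 1
        funext p
        exact finR_snoc WL WR σ k p.1 p.2
    _ = (((Measure.pi (fun _ : Fin k => P₀)).map (finR WL WR σ k)).compProd
          (kernelLR P₀ WL WR (σ k) (hσ k))).map (fun p => Fin.snoc p.1 p.2) := by
        rw [← Measure.map_map (measurable_snoc' k) hpair,
          map_pair_eq_compProd _ P₀ hWLm hWRm (hF k) (hσ k)]
    _ = ((P.map (fun ω (i : Fin k) => banditReward WL WR σ ω i)).compProd
          (kernelLR P₀ WL WR (σ k) (hσ k))).map (fun p => Fin.snoc p.1 p.2) := by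
        rw [Zk_eq WL WR σ k, ← Measure.map_map (hF k) (hrestr k), hmarg k]

include hWLm hWRm in
lemma kernelLR_mem {β : Type*} [MeasurableSpace β] (𝒫₀ : Set (Measure ℝ))
    (h𝒫₀ : 𝒫₀ = { ν : Measure ℝ | IsProbabilityMeasure ν ∧
      ∀ φ : ℝ → ℝ, (∃ L : ℝ≥0, LipschitzWith L φ) →
        ∫ x, φ x ∂ν ≤ max (∫ ω, φ (WL ω) ∂P₀) (∫ ω, φ (WR ω) ∂P₀) })
    (c : β → Bool) (hc : Measurable c) (x : β) :
    kernelLR P₀ WL WR c hc x ∈ 𝒫₀ := by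
  rw [kernelLR_apply, h𝒫₀]
  split_ifs
  · refine ⟨Measure.isProbabilityMeasure_map hWLm.aemeasurable, fun φ hφ => ?_⟩
    obtain ⟨L, hL⟩ := hφ
    rw [integral_map hWLm.aemeasurable hL.continuous.aestronglyMeasurable]
    exact le_max_left _ _
  · refine ⟨Measure.isProbabilityMeasure_map hWRm.aemeasurable, fun φ hφ => ?_⟩
    obtain ⟨L, hL⟩ := hφ
    rw [integral_map hWRm.aemeasurable hL.continuous.aestronglyMeasurable]
    exact le_max_right _ _

include hWLm hWRm in
lemma law_mem_admissible [Nonempty Ω₀] (P : Measure (ℕ → Ω₀)) [IsProbabilityMeasure P]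
    (hmarg : ∀ m : ℕ, P.map (fun ω (i : Fin m) => ω i) = Measure.pi (fun _ : Fin m => P₀))
    (σ : (i : ℕ) → (Fin i → ℝ) → Bool) (hσ : ∀ i, Measurable (σ i))
    (𝒫₀ : Set (Measure ℝ))
    (h𝒫₀ : 𝒫₀ = { ν : Measure ℝ | IsProbabilityMeasure ν ∧
      ∀ φ : ℝ → ℝ, (∃ L : ℝ≥0, LipschitzWith L φ) →
        ∫ x, φ x ∂ν ≤ max (∫ ω, φ (WL ω) ∂P₀) (∫ ω, φ (WR ω) ∂P₀) }) :
    ∀ k : ℕ, P.map (fun ω (i : Fin k) => banditReward WL WR σ ω i)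
      ∈ admissibleLaws (fun _ => 𝒫₀) k := by
  intro k
  induction k with
  | zero =>
    have hZ : Measurable (fun (ω : ℕ → Ω₀) (i : Fin 0) => banditReward WL WR σ ω i) :=
      measurable_pi_lambda _ fun i => i.elim0
    haveI hp : IsProbabilityMeasure
        (P.map (fun ω (i : Fin 0) => banditReward WL WR σ ω i)) :=
      Measure.isProbabilityMeasure_map hZ.aemeasurable
    rw [admissibleLaws, Set.mem_singleton_iff]
    ext s hs
    rcases Set.eq_empty_or_nonempty s with rfl | ⟨a, ha⟩
    · simp
    · have hsu : s = Set.univ := Set.eq_univ_of_forall fun b => by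
        rwa [Subsingleton.elim b a]
      rw [hsu, measure_univ, measure_univ]
  | succ k ih =>
    rw [admissibleLaws]
    exact ⟨_, ih, kernelLR P₀ WL WR (σ k) (hσ k),
      kernelLR_markov P₀ WL WR hWLm hWRm (σ k) (hσ k),
      fun x => kernelLR_mem P₀ WL WR hWLm hWRm 𝒫₀ h𝒫₀ (σ k) (hσ k) x,
      law_succ P₀ WL WR hWLm hWRm P hmarg σ hσ k⟩

lemma intW_measurable {W : Ω₀ → ℝ} (hW : Measurable W) (k : ℕ)
    {g : (Fin (k + 1) → ℝ) → ℝ} (hg : Measurable g) :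
    Measurable fun x : Fin k → ℝ => ∫ ω, g (Fin.snoc x (W ω)) ∂P₀ := by
  have hj : StronglyMeasurable (fun q : (Fin k → ℝ) × Ω₀ => g (Fin.snoc q.1 (W q.2))) :=
    (hg.comp ((measurable_snoc' k).comp
      (measurable_fst.prodMk (hW.comp measurable_snd)))).stronglyMeasurable
  exact hj.integral_prod_right'.measurable

include hWLm hWRm in
lemma integral_law_succ [Nonempty Ω₀] (P : Measure (ℕ → Ω₀)) [IsProbabilityMeasure P]
    (hmarg : ∀ m : ℕ, P.map (fun ω (i : Fin m) => ω i) = Measure.pi (fun _ : Fin m => P₀))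
    (σ : (i : ℕ) → (Fin i → ℝ) → Bool) (hσ : ∀ i, Measurable (σ i)) (k : ℕ)
    {g : (Fin (k + 1) → ℝ) → ℝ} (hg : Measurable g) {C : ℝ} (hgb : ∀ x, |g x| ≤ C) :
    ∫ x, g x ∂(P.map (fun ω (i : Fin (k + 1)) => banditReward WL WR σ ω i))
    = ∫ x, (if σ k x then ∫ ω, g (Fin.snoc x (WL ω)) ∂P₀
        else ∫ ω, g (Fin.snoc x (WR ω)) ∂P₀)
        ∂(P.map (fun ω (i : Fin k) => banditReward WL WR σ ω i)) := by
  haveI := kernelLR_markov P₀ WL WR hWLm hWRm (σ k) (hσ k)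
  have hZk : Measurable (fun (ω : ℕ → Ω₀) (i : Fin k) => banditReward WL WR σ ω i) :=
    measurable_pi_lambda _ fun i => br_measurable WL WR σ hWLm hWRm hσ i
  haveI : IsProbabilityMeasure
      (P.map (fun ω (i : Fin k) => banditReward WL WR σ ω i)) :=
    Measure.isProbabilityMeasure_map hZk.aemeasurable
  have hgsnoc : Measurable fun p : (Fin k → ℝ) × ℝ => g (Fin.snoc p.1 p.2) :=
    hg.comp (measurable_snoc' k)
  have hint : Integrable (fun p : (Fin k → ℝ) × ℝ => g (Fin.snoc p.1 p.2))
      ((P.map (fun ω (i : Fin k) => banditReward WL WR σ ω i)).compProd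
        (kernelLR P₀ WL WR (σ k) (hσ k))) :=
    bdd_integrable _ hgsnoc.aestronglyMeasurable C (fun p => hgb _)
  rw [law_succ P₀ WL WR hWLm hWRm P hmarg σ hσ k,
    integral_map (measurable_snoc' k).aemeasurable hg.aestronglyMeasurable,
    Measure.integral_compProd hint]
  apply integral_congr_ae
  apply ae_of_all
  intro x
  show ∫ b, g (Fin.snoc x b) ∂(kernelLR P₀ WL WR (σ k) (hσ k)) x
      = if σ k x = true then ∫ ω, g (Fin.snoc x (WL ω)) ∂P₀
        else ∫ ω, g (Fin.snoc x (WR ω)) ∂P₀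
  rw [kernelLR_apply]
  have hsnocx : Measurable (fun b : ℝ => g (Fin.snoc x b)) :=
    hg.comp ((measurable_snoc' k).comp (measurable_const.prodMk measurable_id))
  by_cases h : σ k x = true
  · rw [if_pos h, if_pos h]
    have hsm : AEStronglyMeasurable (fun b : ℝ => g (Fin.snoc x b)) (P₀.map WL) :=
      hsnocx.aestronglyMeasurable
    rw [integral_map hWLm.aemeasurable hsm]
  · rw [if_neg h, if_neg h]
    have hsm : AEStronglyMeasurable (fun b : ℝ => g (Fin.snoc x b)) (P₀.map WR) :=
      hsnocx.aestronglyMeasurable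
    rw [integral_map hWRm.aemeasurable hsm]

include hWLm hWRm in
lemma exists_greedy [Nonempty Ω₀] (P : Measure (ℕ → Ω₀)) [IsProbabilityMeasure P]
    (hmarg : ∀ m : ℕ, P.map (fun ω (i : Fin m) => ω i) = Measure.pi (fun _ : Fin m => P₀)) :
    ∀ (k : ℕ) (g : (Fin k → ℝ) → ℝ), Measurable g → ∀ C : ℝ, (∀ x, |g x| ≤ C) →
    ∃ σ : (i : ℕ) → (Fin i → ℝ) → Bool, (∀ i, Measurable (σ i)) ∧
      ∫ ω, g (fun i : Fin k => banditReward WL WR σ ω i) ∂P = valueFn P₀ WL WR k g := by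
  intro k
  induction k with
  | zero =>
    intro g hg C hgb
    refine ⟨fun _ _ => false, fun i => measurable_const, ?_⟩
    have h0 : (fun ω : ℕ → Ω₀ =>
        g (fun i : Fin 0 => banditReward WL WR (fun _ _ => false) ω i))
        = fun _ => g (fun i => i.elim0) := by
      funext ω; congr 1; funext i; exact i.elim0
    rw [h0, integral_const, probReal_univ, smul_eq_mul, one_mul]
    rfl
  | succ k ih =>
    intro g hg C hgb
    obtain ⟨σ', hσ'm, hσ'val⟩ := ih (stepFn P₀ WL WR k g)
      (stepFn_measurable P₀ WL WR hWLm hWRm hg) C (stepFn_bound P₀ WL WR hgb)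
    set EL : (Fin k → ℝ) → ℝ := fun x => ∫ ω, g (Fin.snoc x (WL ω)) ∂P₀ with hEL
    set ER : (Fin k → ℝ) → ℝ := fun x => ∫ ω, g (Fin.snoc x (WR ω)) ∂P₀ with hER
    set greedy : (Fin k → ℝ) → Bool := fun x => if ER x ≤ EL x then true else false with hgr
    have hgreedym : Measurable greedy :=
      Measurable.ite (measurableSet_le (intW_measurable P₀ hWRm k hg)
        (intW_measurable P₀ hWLm k hg)) measurable_const measurable_const
    set σ : (i : ℕ) → (Fin i → ℝ) → Bool := Function.update σ' k greedy with hσdef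
    have hσm : ∀ i, Measurable (σ i) := by
      intro i
      rcases eq_or_ne i k with rfl | h
      · rw [hσdef, Function.update_self]
        exact hgreedym
      · rw [hσdef, Function.update_of_ne h]
        exact hσ'm i
    have hσk : σ k = greedy := by rw [hσdef, Function.update_self]
    have hagree : (fun (ω : ℕ → Ω₀) (i : Fin k) => banditReward WL WR σ ω i)
        = fun ω (i : Fin k) => banditReward WL WR σ' ω i := by
      funext ω
      funext i
      apply br_congr_sigma
      intro j hj
      have hjk : j ≠ k := Nat.ne_of_lt (lt_of_le_of_lt hj i.2)
      rw [hσdef, Function.update_of_ne hjk]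
    have hZsucc : Measurable (fun (ω : ℕ → Ω₀) (i : Fin (k + 1)) =>
        banditReward WL WR σ ω i) :=
      measurable_pi_lambda _ fun i => br_measurable WL WR σ hWLm hWRm hσm i
    have hZk' : Measurable (fun (ω : ℕ → Ω₀) (i : Fin k) => banditReward WL WR σ' ω i) :=
      measurable_pi_lambda _ fun i => br_measurable WL WR σ' hWLm hWRm hσ'm i
    refine ⟨σ, hσm, ?_⟩
    have step1 : ∫ ω, g (fun i : Fin (k + 1) => banditReward WL WR σ ω i) ∂P
        = ∫ x, g x ∂(P.map (fun ω (i : Fin (k + 1)) => banditReward WL WR σ ω i)) :=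
      (integral_map hZsucc.aemeasurable hg.aestronglyMeasurable).symm
    rw [step1, integral_law_succ P₀ WL WR hWLm hWRm P hmarg σ hσm k hg hgb]
    have step2 : (fun x => if σ k x = true then EL x else ER x)
        = stepFn P₀ WL WR k g := by
      funext x
      rw [hσk, hgr]
      by_cases h : ER x ≤ EL x
      · simp only [if_pos h, if_true, stepFn]
        exact (max_eq_left h).symm
      · simp only [if_neg h, Bool.false_eq_true, if_false, stepFn]
        exact (max_eq_right (le_of_not_ge h)).symm
    rw [show (fun x => if σ k x = true then EL x else ER x)
        = stepFn P₀ WL WR k g from step2]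
    rw [hagree,
      integral_map hZk'.aemeasurable
        (stepFn_measurable P₀ WL WR hWLm hWRm hg).aestronglyMeasurable]
    exact hσ'val

end Strategy


/-- In the two-armed bandit with i.i.d. payoffs, for every `n` and every
bounded Borel `f : ℝⁿ → ℝ`, the supremum over all strategies of `E_P[f(Z₁,…,Zₙ)]` is
attained and equals `sup_{Q ∈ 𝒫} E_Q[f(X₁,…,Xₙ)]`, where `𝒫` is the kernel-generated set
over the set `𝒫₀` of laws dominated by `φ ↦ max(E[φ(W^L)], E[φ(W^R)])`. -/
theorem two_armed_bandit_sup_strategies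
    {Ω₀ : Type*} [MeasurableSpace Ω₀] (P₀ : Measure Ω₀) [IsProbabilityMeasure P₀]
    (WL WR : Ω₀ → ℝ) (hWLm : Measurable WL) (hWRm : Measurable WR)
    (hWLb : ∃ M : ℝ, ∀ ω, |WL ω| ≤ M) (hWRb : ∃ M : ℝ, ∀ ω, |WR ω| ≤ M)
    -- `P` is the infinite product of copies of `P₀`
    (P : Measure (ℕ → Ω₀)) (hPprob : IsProbabilityMeasure P)
    (hmarg : ∀ n : ℕ, P.map (fun ω (i : Fin n) => ω i) = Measure.pi (fun _ : Fin n => P₀))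
    (𝒫₀ : Set (Measure ℝ))
    (h𝒫₀ : 𝒫₀ = { ν : Measure ℝ | IsProbabilityMeasure ν ∧
      ∀ φ : ℝ → ℝ, (∃ L : ℝ≥0, LipschitzWith L φ) →
        ∫ x, φ x ∂ν ≤ max (∫ ω, φ (WL ω) ∂P₀) (∫ ω, φ (WR ω) ∂P₀) })
    (n : ℕ) (hn : 1 ≤ n)
    (f : (Fin n → ℝ) → ℝ) (hfm : Measurable f) (hfb : ∃ C : ℝ, ∀ x, |f x| ≤ C) :
    IsGreatest
      { r : ℝ | ∃ σ : (i : ℕ) → (Fin i → ℝ) → Bool, (∀ i, Measurable (σ i)) ∧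
          r = ∫ ω, f (fun i : Fin n => banditReward WL WR σ ω i) ∂P }
      (⨆ Q : kernelSet fun _ => 𝒫₀,
        ∫ ω, f (fun i : Fin n => ω i) ∂(Q : Measure (ℕ → ℝ))) := by
  haveI : Nonempty Ω₀ := by
    by_contra h
    rw [not_nonempty_iff] at h
    have h1 : P₀ Set.univ = 1 := measure_univ
    rw [Set.univ_eq_empty_iff.2 h, measure_empty] at h1
    exact zero_ne_one h1
  obtain ⟨C, hC⟩ := hfb
  obtain ⟨σs, hσsm, hσsval⟩ := exists_greedy P₀ WL WR hWLm hWRm P hmarg n f hfm C hC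
  have hfull : ∀ (σ : (i : ℕ) → (Fin i → ℝ) → Bool), (∀ i, Measurable (σ i)) →
      Measurable (fun (ω : ℕ → Ω₀) (i : ℕ) => banditReward WL WR σ ω i) := fun σ hσ =>
    measurable_pi_lambda _ fun i => br_measurable WL WR σ hWLm hWRm hσ i
  have hrestrℝ : Measurable (fun (ω : ℕ → ℝ) (i : Fin n) => ω (i : ℕ)) :=
    measurable_pi_lambda _ fun i => measurable_pi_apply _
  have hQ : ∀ (σ : (i : ℕ) → (Fin i → ℝ) → Bool), (∀ i, Measurable (σ i)) →
      (P.map (fun ω (i : ℕ) => banditReward WL WR σ ω i)) ∈ kernelSet (fun _ => 𝒫₀) ∧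
      ∫ ω, f (fun i : Fin n => ω i)
          ∂(P.map (fun ω (i : ℕ) => banditReward WL WR σ ω i))
        = ∫ ω, f (fun i : Fin n => banditReward WL WR σ ω i) ∂P := by
    intro σ hσ
    constructor
    · refine ⟨Measure.isProbabilityMeasure_map (hfull σ hσ).aemeasurable, fun m => ?_⟩
      have hmm : (P.map (fun ω (i : ℕ) => banditReward WL WR σ ω i)).map
          (fun ω (i : Fin m) => ω (i : ℕ))
          = P.map (fun ω (i : Fin m) => banditReward WL WR σ ω i) := by
        rw [Measure.map_map
          (measurable_pi_lambda _ fun i => measurable_pi_apply _) (hfull σ hσ)]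
        rfl
      rw [hmm]
      exact law_mem_admissible P₀ WL WR hWLm hWRm P hmarg σ hσ 𝒫₀ h𝒫₀ m
    · have hsm : AEStronglyMeasurable (fun ω : ℕ → ℝ => f fun i : Fin n => ω (i : ℕ))
          ((P.map (fun ω (i : ℕ) => banditReward WL WR σ ω i))) :=
        (hfm.comp hrestrℝ).aestronglyMeasurable
      rw [integral_map (hfull σ hσ).aemeasurable hsm]
  have hub : ∀ Q : Measure (ℕ → ℝ), Q ∈ kernelSet (fun _ : ℕ => 𝒫₀) →
      ∫ ω, f (fun i : Fin n => ω i) ∂Q ≤ valueFn P₀ WL WR n f := by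
    intro Q hQmem
    have h1 : ∫ ω, f (fun i : Fin n => ω i) ∂Q
        = ∫ x, f x ∂(Q.map (fun ω (i : Fin n) => ω i)) :=
      (integral_map hrestrℝ.aemeasurable hfm.aestronglyMeasurable).symm
    rw [h1]
    exact admissible_le_value P₀ WL WR hWLm hWRm 𝒫₀ h𝒫₀ n _ (hQmem.2 n) f hfm C hC
  obtain ⟨hQsmem, hQsint⟩ := hQ σs hσsm
  haveI hne : Nonempty ↥(kernelSet (fun _ : ℕ => 𝒫₀)) :=
    ⟨⟨P.map (fun ω (i : ℕ) => banditReward WL WR σs ω i), hQsmem⟩⟩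
  have hbdd : BddAbove (Set.range fun Q : ↥(kernelSet (fun _ : ℕ => 𝒫₀)) =>
      ∫ ω, f (fun i : Fin n => ω i) ∂(Q : Measure (ℕ → ℝ))) := by
    refine ⟨valueFn P₀ WL WR n f, ?_⟩
    rintro r ⟨Q, rfl⟩
    exact hub Q Q.2
  have hsup_le : (⨆ Q : kernelSet (fun _ : ℕ => 𝒫₀),
      ∫ ω, f (fun i : Fin n => ω i) ∂(Q : Measure (ℕ → ℝ))) ≤ valueFn P₀ WL WR n f :=
    ciSup_le fun Q => hub Q Q.2
  have hval_le : valueFn P₀ WL WR n f ≤ ⨆ Q : kernelSet (fun _ : ℕ => 𝒫₀),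
      ∫ ω, f (fun i : Fin n => ω i) ∂(Q : Measure (ℕ → ℝ)) := by
    rw [← hσsval, ← hQsint]
    exact le_ciSup hbdd
      (⟨P.map (fun ω (i : ℕ) => banditReward WL WR σs ω i), hQsmem⟩ :
        ↥(kernelSet (fun _ : ℕ => 𝒫₀)))
  have heq : (⨆ Q : kernelSet (fun _ : ℕ => 𝒫₀),
      ∫ ω, f (fun i : Fin n => ω i) ∂(Q : Measure (ℕ → ℝ))) = valueFn P₀ WL WR n f :=
    le_antisymm hsup_le hval_le
  constructor
  · exact ⟨σs, hσsm, by rw [heq, ← hσsval]⟩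
  · rintro r ⟨σ, hσ, rfl⟩
    obtain ⟨hmem, hint⟩ := hQ σ hσ
    rw [← hint]
    exact le_trans (hub _ hmem) hval_le
end
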